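/- arXiv:2402.06376 — 7 statements merged into one kernel-verified Lean document; each statement's English description precedes it below -/
import Mathlib

section
/- Let H be a real Hilbert space and let f_1,…,f_k : H → ℝ each be locally Lipschitz near a point x ∈ H. If x is locally weakly Pareto optimal for (f_1,…,f_k), then 0 ∈ convexHull(⋃_{i=1}^k ∂f_i(x)). -/
open Filter Topology RealInnerProductSpace

/-- Clarke generalized directional derivative
`f°(x;v) = limsup_{y→x, t↓0} (f(y+tv) − f(y))/t`. -/
noncomputable def clarkeDir {H : Type*} [NormedAddCommGroup H] [InnerProductSpace ℝ H]
    (f : H → ℝ) (x v : H) : ℝ :=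
  limsup (fun p : H × ℝ => (f (p.1 + p.2 • v) - f p.1) / p.2)
    ((𝓝 x) ×ˢ (𝓝[>] (0 : ℝ)))

/-- Clarke subdifferential, with the dual of `H` identified with `H` via the Riesz map:
`∂f(x) = {w : ⟪w, v⟫ ≤ f°(x;v) for all v}`. -/
def clarkeSubdiff {H : Type*} [NormedAddCommGroup H] [InnerProductSpace ℝ H]
    (f : H → ℝ) (x : H) : Set H :=
  {w : H | ∀ v : H, ⟪w, v⟫ ≤ clarkeDir f x v}

/-- Goldstein ε-subdifferential
`∂_ε f(x) = closure (convexHull (⋃_{y ∈ closedBall x ε} ∂f(y)))`. -/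
def goldsteinSubdiff {H : Type*} [NormedAddCommGroup H] [InnerProductSpace ℝ H]
    (f : H → ℝ) (ε : ℝ) (x : H) : Set H :=
  closure (convexHull ℝ (⋃ y ∈ Metric.closedBall x ε, clarkeSubdiff f y))

/-- `f` is locally Lipschitz near `x`: Lipschitz on some open ball around `x`. -/
def LocallyLipschitzNear {H : Type*} [NormedAddCommGroup H]
    (f : H → ℝ) (x : H) : Prop :=
  ∃ ε > 0, ∃ L : NNReal, LipschitzOnWith L f (Metric.ball x ε)

/-- Multiobjective ε-subdifferential `F_ε(x) = closure (convexHull (⋃ i, ∂_ε f_i(x)))`. -/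
def multiSubdiff {H : Type*} [NormedAddCommGroup H] [InnerProductSpace ℝ H]
    {k : ℕ} (f : Fin k → H → ℝ) (ε : ℝ) (x : H) : Set H :=
  closure (convexHull ℝ (⋃ i : Fin k, goldsteinSubdiff (f i) ε x))

/-- The weak topology on `H`: the topology induced by the functionals `⟪·, v⟫`, `v : H`. -/
noncomputable def weakTopology (H : Type*) [NormedAddCommGroup H] [InnerProductSpace ℝ H] :
    TopologicalSpace H :=
  ⨅ v : H, TopologicalSpace.induced (fun x : H => ⟪x, v⟫) inferInstance

section CD
variable {H : Type*} [NormedAddCommGroup H] [InnerProductSpace ℝ H] {f : H → ℝ} {x : H}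

/-- difference quotient -/
noncomputable def dq (f : H → ℝ) (v : H) (p : H × ℝ) : ℝ := (f (p.1 + p.2 • v) - f p.1) / p.2

noncomputable def Ffil (x : H) : Filter (H × ℝ) := (𝓝 x) ×ˢ (𝓝[>] (0 : ℝ))

instance (x : H) : (Ffil x).NeBot := by
  unfold Ffil; infer_instance

lemma clarkeDir_eq (v : H) : clarkeDir f x v = limsup (dq f v) (Ffil x) := rfl

lemma exists_dq_bound (hf : LocallyLipschitzNear f x) :
    ∃ C : ℝ, 0 ≤ C ∧ ∀ v : H, ∀ᶠ p in Ffil x, |dq f v p| ≤ C * ‖v‖ := by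
  obtain ⟨ε, hε, L, hL⟩ := hf
  refine ⟨L, L.coe_nonneg, fun v => ?_⟩
  have h1 : ∀ᶠ y in 𝓝 x, y ∈ Metric.ball x (ε/2) :=
    Metric.ball_mem_nhds x (by linarith)
  have h2 : ∀ᶠ t in 𝓝[>] (0:ℝ), t ∈ Set.Ioo 0 (ε/(2*(‖v‖+1))) := by
    refine Ioo_mem_nhdsGT_of_mem ⟨le_refl _, ?_⟩
    positivity
  filter_upwards [(h1.prod_mk h2 : ∀ᶠ p in Ffil x, _)] with p hp
  obtain ⟨hy, ht0, htu⟩ := hp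
  have hvpos : (0:ℝ) < ‖v‖ + 1 := by positivity
  have hyball : p.1 ∈ Metric.ball x ε := by
    rw [Metric.mem_ball] at hy ⊢; linarith
  have htv : p.2 * ‖v‖ < ε / 2 := by
    calc p.2 * ‖v‖ ≤ p.2 * (‖v‖ + 1) := by nlinarith [ht0.le]
    _ < (ε/(2*(‖v‖+1))) * (‖v‖+1) := by exact mul_lt_mul_of_pos_right htu hvpos
    _ = ε / 2 := by field_simp
  have hyv : p.1 + p.2 • v ∈ Metric.ball x ε := by
    rw [Metric.mem_ball] at hy ⊢
    calc dist (p.1 + p.2 • v) x ≤ dist (p.1 + p.2 • v) p.1 + dist p.1 x := dist_triangle _ _ _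
    _ = ‖p.2 • v‖ + dist p.1 x := by rw [dist_self_add_left]
    _ < ε/2 + ε/2 := by
        rw [norm_smul, Real.norm_eq_abs, abs_of_pos ht0]
        exact add_lt_add htv hy
    _ = ε := by ring
  have hlip := hL.dist_le_mul _ hyv _ hyball
  rw [Real.dist_eq] at hlip
  have : dist (p.1 + p.2 • v) p.1 = p.2 * ‖v‖ := by
    rw [dist_self_add_left, norm_smul, Real.norm_eq_abs, abs_of_pos ht0]
  rw [this] at hlip
  have : |dq f v p| ≤ (L * (p.2 * ‖v‖)) / p.2 := by
    rw [dq, abs_div, abs_of_pos ht0]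
    exact div_le_div_of_nonneg_right hlip ht0.le
  calc |dq f v p| ≤ (L * (p.2 * ‖v‖)) / p.2 := this
  _ = L * ‖v‖ := by field_simp

section Bounded
variable {v : H} {B : ℝ}

lemma bdd_above_of (hb : ∀ᶠ p in Ffil x, |dq f v p| ≤ B) :
    IsBoundedUnder (· ≤ ·) (Ffil x) (dq f v) :=
  ⟨B, hb.mono fun p hp => (abs_le.mp hp).2⟩

lemma bdd_below_of (hb : ∀ᶠ p in Ffil x, |dq f v p| ≤ B) :
    IsBoundedUnder (· ≥ ·) (Ffil x) (dq f v) :=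
  ⟨-B, hb.mono fun p hp => (abs_le.mp hp).1⟩

lemma clarkeDir_le_of (hb : ∀ᶠ p in Ffil x, |dq f v p| ≤ B) : clarkeDir f x v ≤ B := by
  rw [clarkeDir_eq]
  exact limsup_le_of_le ((bdd_below_of hb).isCoboundedUnder_le)
    (hb.mono fun p hp => (abs_le.mp hp).2)

lemma neg_le_clarkeDir_of (hb : ∀ᶠ p in Ffil x, |dq f v p| ≤ B) : -B ≤ clarkeDir f x v := by
  rw [clarkeDir_eq]
  exact le_limsup_of_frequently_le
    ((hb.mono fun p hp => (abs_le.mp hp).1).frequently) (bdd_above_of hb)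

end Bounded

lemma clarkeDir_zero : clarkeDir f x (0 : H) = 0 := by
  rw [clarkeDir_eq]
  have : dq f (0 : H) = fun _ => (0:ℝ) := by
    funext p; simp [dq]
  rw [this, limsup_const]


variable {v w : H}

lemma tendsto_shift (w : H) :
    Tendsto (fun p : H × ℝ => (p.1 + p.2 • w, p.2)) (Ffil x) (Ffil x) := by
  apply Tendsto.prodMk
  · have h1 : Tendsto (fun p : H × ℝ => p.1) (Ffil x) (𝓝 x) := tendsto_fst
    have h2 : Tendsto (fun p : H × ℝ => p.2) (Ffil x) (𝓝 (0:ℝ)) :=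
      tendsto_snd.mono_right nhdsWithin_le_nhds
    have := (h2.smul_const w)
    rw [zero_smul] at this
    simpa using h1.add this
  · exact tendsto_snd

lemma limsup_comp_le (u : H × ℝ → ℝ) {φ : H × ℝ → H × ℝ}
    (hφ : Tendsto φ (Ffil x) (Ffil x))
    (hbdd : IsBoundedUnder (· ≤ ·) (Ffil x) u)
    (hcob : IsBoundedUnder (· ≥ ·) (Ffil x) (u ∘ φ)) :
    limsup (u ∘ φ) (Ffil x) ≤ limsup u (Ffil x) := by
  have h1 : limsup (u ∘ φ) (Ffil x) = limsup u (map φ (Ffil x)) := by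
    rw [limsup, limsup, ← Filter.map_map]
  rw [h1]
  refine limsup_le_limsup_of_le hφ ?_ hbdd
  show (map u (map φ (Ffil x))).IsCobounded (· ≤ ·)
  rw [Filter.map_map]
  exact hcob.isCoboundedUnder_le

lemma clarkeDir_add_le (hf : LocallyLipschitzNear f x) (v w : H) :
    clarkeDir f x (v + w) ≤ clarkeDir f x v + clarkeDir f x w := by
  obtain ⟨C, hC0, hC⟩ := exists_dq_bound hf
  set φ : H × ℝ → H × ℝ := fun p => (p.1 + p.2 • w, p.2) with hφdef
  have hφ : Tendsto φ (Ffil x) (Ffil x) := tendsto_shift w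
  have key : ∀ᶠ p in Ffil x, dq f (v + w) p = dq f v (φ p) + dq f w p := by
    filter_upwards [] with p
    have harg : p.1 + p.2 • (v + w) = p.1 + p.2 • w + p.2 • v := by
      rw [smul_add]; abel
    simp only [dq, hφdef]
    rw [harg, ← add_div, sub_add_sub_cancel]
  have hb1 : ∀ᶠ p in Ffil x, |dq f v (φ p)| ≤ C * ‖v‖ := hφ.eventually (hC v)
  have hb2 := hC w
  have hbv : IsBoundedUnder (· ≤ ·) (Ffil x) (dq f v ∘ φ) :=
    ⟨C * ‖v‖, hb1.mono fun p hp => (abs_le.mp hp).2⟩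
  have hbv' : IsBoundedUnder (· ≥ ·) (Ffil x) (dq f v ∘ φ) :=
    ⟨-(C * ‖v‖), hb1.mono fun p hp => (abs_le.mp hp).1⟩
  calc clarkeDir f x (v + w) = limsup (fun p => dq f v (φ p) + dq f w p) (Ffil x) := by
        rw [clarkeDir_eq]; exact limsup_congr key
  _ ≤ limsup (dq f v ∘ φ) (Ffil x) + limsup (dq f w) (Ffil x) := by
        exact limsup_add_le hbv' hbv (bdd_below_of hb2).isCoboundedUnder_le (bdd_above_of hb2)
  _ ≤ clarkeDir f x v + clarkeDir f x w := by
        gcongr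
        · exact limsup_comp_le (dq f v) hφ (bdd_above_of (hC v)) hbv'
        · rw [clarkeDir_eq]

lemma tendsto_mul_pos {c : ℝ} (hc : 0 < c) :
    Tendsto (fun t : ℝ => c * t) (𝓝[>] (0:ℝ)) (𝓝[>] (0:ℝ)) := by
  rw [tendsto_nhdsWithin_iff]
  constructor
  · have h : Tendsto (fun t : ℝ => c * t) (𝓝 (0:ℝ)) (𝓝 (c * 0)) :=
      (continuous_const.mul continuous_id).tendsto 0
    rw [mul_zero] at h
    exact h.mono_left nhdsWithin_le_nhds
  · filter_upwards [self_mem_nhdsWithin] with t ht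
    exact mul_pos hc ht

lemma map_mul_Ioi {c : ℝ} (hc : 0 < c) :
    map (fun t : ℝ => c * t) (𝓝[>] (0:ℝ)) = 𝓝[>] (0:ℝ) := by
  refine le_antisymm (tendsto_mul_pos hc) ?_
  have heq : map (fun t : ℝ => c * t) (map (fun t : ℝ => c⁻¹ * t) (𝓝[>] (0:ℝ)))
      = 𝓝[>] (0:ℝ) := by
    rw [Filter.map_map]
    have : ((fun t : ℝ => c * t) ∘ fun t : ℝ => c⁻¹ * t) = id := by
      funext t; simp [Function.comp, ← mul_assoc, mul_inv_cancel₀ hc.ne']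
    rw [this, Filter.map_id]
  calc 𝓝[>] (0:ℝ) = map (fun t : ℝ => c * t) (map (fun t : ℝ => c⁻¹ * t) (𝓝[>] (0:ℝ))) :=
        heq.symm
  _ ≤ map (fun t : ℝ => c * t) (𝓝[>] (0:ℝ)) := map_mono (tendsto_mul_pos (inv_pos.mpr hc))

lemma clarkeDir_smul (hf : LocallyLipschitzNear f x) {c : ℝ} (hc : 0 ≤ c) (v : H) :
    clarkeDir f x (c • v) = c * clarkeDir f x v := by
  rcases eq_or_lt_of_le hc with h | h
  · rw [← h, zero_smul, zero_mul, clarkeDir_zero]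
  obtain ⟨C, hC0, hC⟩ := exists_dq_bound hf
  set ψ : H × ℝ → H × ℝ := fun p => (p.1, c * p.2) with hψdef
  have hmap : map ψ (Ffil x) = Ffil x := by
    have hψ2 : ψ = Prod.map id (fun t : ℝ => c * t) := rfl
    rw [hψ2]
    unfold Ffil
    rw [← Filter.prod_map_map_eq', Filter.map_id, map_mul_Ioi h]
  have hψten : Tendsto ψ (Ffil x) (Ffil x) := hmap.le
  have key : ∀ p : H × ℝ, dq f (c • v) p = c * dq f v (ψ p) := by
    intro p
    simp only [dq, hψdef]
    have harg : p.1 + (c * p.2) • v = p.1 + p.2 • c • v := by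
      rw [smul_smul, mul_comm]
    rw [harg, mul_comm c p.2, ← div_div, mul_comm c _, div_mul_cancel₀ _ h.ne']
  have hb1 : ∀ᶠ p in Ffil x, |dq f v (ψ p)| ≤ C * ‖v‖ := hψten.eventually (hC v)
  have hu1 : IsBoundedUnder (· ≤ ·) (Ffil x) (fun p => dq f v (ψ p)) :=
    ⟨C * ‖v‖, hb1.mono fun p hp => (abs_le.mp hp).2⟩
  have hu2 : IsBoundedUnder (· ≥ ·) (Ffil x) (fun p => dq f v (ψ p)) :=
    ⟨-(C * ‖v‖), hb1.mono fun p hp => (abs_le.mp hp).1⟩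
  have hg1 : IsBoundedUnder (· ≤ ·) (Ffil x) (fun p => c * dq f v (ψ p)) :=
    ⟨c * (C * ‖v‖), hb1.mono fun p hp =>
      mul_le_mul_of_nonneg_left ((abs_le.mp hp).2) h.le⟩
  have hg2 : IsBoundedUnder (· ≥ ·) (Ffil x) (fun p => c * dq f v (ψ p)) :=
    ⟨-(c * (C * ‖v‖)), hb1.mono fun p hp => by
      have := mul_le_mul_of_nonneg_left ((abs_le.mp hp).1) h.le
      simpa using this⟩
  have e := OrderIso.mulLeft₀ c h
  calc clarkeDir f x (c • v)
      = limsup (fun p => c * dq f v (ψ p)) (Ffil x) := by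
        rw [clarkeDir_eq]; exact limsup_congr (Eventually.of_forall key)
  _ = c * limsup (fun p => dq f v (ψ p)) (Ffil x) := by
        exact ((OrderIso.mulLeft₀ c h).limsup_apply hu1 hu2.isCoboundedUnder_le
          hg1 hg2.isCoboundedUnder_le).symm
  _ = c * clarkeDir f x v := by
        have hcomp : limsup (fun p => dq f v (ψ p)) (Ffil x)
            = limsup (dq f v) (map ψ (Ffil x)) := by
          rw [limsup, limsup, Filter.map_map]
          rfl
        rw [hcomp, hmap, clarkeDir_eq]

lemma clarkeDir_sum_le (hf : LocallyLipschitzNear f x) {V : Type*} [DecidableEq V]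
    (s : Finset V) (μ : V → ℝ) (hμ : ∀ j ∈ s, 0 ≤ μ j) (vec : V → H) :
    clarkeDir f x (∑ j ∈ s, μ j • vec j) ≤ ∑ j ∈ s, μ j * clarkeDir f x (vec j) := by
  induction s using Finset.induction with
  | empty => simp [clarkeDir_zero]
  | @insert a s ha ih =>
    rw [Finset.sum_insert ha, Finset.sum_insert ha]
    calc clarkeDir f x (μ a • vec a + ∑ j ∈ s, μ j • vec j)
        ≤ clarkeDir f x (μ a • vec a) + clarkeDir f x (∑ j ∈ s, μ j • vec j) :=
          clarkeDir_add_le hf _ _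
    _ ≤ μ a * clarkeDir f x (vec a) + ∑ j ∈ s, μ j * clarkeDir f x (vec j) := by
        rw [clarkeDir_smul hf (hμ a (Finset.mem_insert_self a s)) (vec a)]
        exact add_le_add le_rfl (ih fun j hj => hμ j (Finset.mem_insert_of_mem hj))

lemma stepA {k : ℕ} {f : Fin k → H → ℝ} {x : H}
    (hlip : ∀ i, LocallyLipschitzNear (f i) x)
    {δ : ℝ} (hδ : 0 < δ)
    (hpar : ¬ ∃ x' : H, ‖x' - x‖ < δ ∧ ∀ i, f i x' < f i x)
    (v : H) : ∃ i, 0 ≤ clarkeDir (f i) x v := by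
  by_contra hneg
  push_neg at hneg
  have hev : ∀ i, ∀ᶠ p in Ffil x, dq (f i) v p < 0 := by
    intro i
    obtain ⟨C, hC0, hC⟩ := exists_dq_bound (hlip i)
    exact eventually_lt_of_limsup_lt (hneg i) (bdd_above_of (hC v))
  have hall : ∀ᶠ p in Ffil x, ∀ i, dq (f i) v p < 0 := eventually_all.mpr hev
  have hten : Tendsto (fun t : ℝ => ((x, t) : H × ℝ)) (𝓝[>] (0:ℝ)) (Ffil x) :=
    Tendsto.prodMk tendsto_const_nhds tendsto_id
  have hpull : ∀ᶠ t in 𝓝[>] (0:ℝ), ∀ i, dq (f i) v (x, t) < 0 := hten.eventually hall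
  have hv1 : (0:ℝ) < ‖v‖ + 1 := by positivity
  have hsmall : ∀ᶠ t in 𝓝[>] (0:ℝ), t ∈ Set.Ioo 0 (δ / (‖v‖ + 1)) :=
    Ioo_mem_nhdsGT_of_mem ⟨le_refl _, by positivity⟩
  obtain ⟨t, hdq, ht0, htlt⟩ := (hpull.and hsmall).exists
  refine hpar ⟨x + t • v, ?_, ?_⟩
  · rw [add_sub_cancel_left, norm_smul, Real.norm_eq_abs, abs_of_pos ht0]
    calc t * ‖v‖ ≤ t * (‖v‖ + 1) := by nlinarith
    _ < (δ / (‖v‖ + 1)) * (‖v‖ + 1) := mul_lt_mul_of_pos_right htlt hv1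
    _ = δ := by field_simp
  · intro i
    have h := hdq i
    simp only [dq] at h
    rw [div_lt_iff₀ ht0, zero_mul] at h
    linarith

end CD

/-- Finite-dimensional minimax/Farkas alternative. -/
lemma matrix_alt {k : ℕ} (hk : 0 < k) {V : Type*} [DecidableEq V]
    (u : Finset V) (c : Fin k → V → ℝ) :
    (∃ l ∈ stdSimplex ℝ (Fin k), ∀ v ∈ u, 0 ≤ ∑ i, l i * c i v) ∨
    (∃ μ : V → ℝ, (∀ v ∈ u, 0 ≤ μ v) ∧ ∑ v ∈ u, μ v = 1 ∧ ∀ i, ∑ v ∈ u, μ v * c i v < 0) := by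
  classical
  obtain ⟨i0⟩ := Fin.pos_iff_nonempty.mp hk
  rcases u.eq_empty_or_nonempty with rfl | hu
  · left
    refine ⟨fun j => if j = i0 then 1 else 0,
      ⟨fun j => by by_cases h : j = i0 <;> simp [h], by simp⟩, by simp⟩
  by_cases hμ : ∃ μ : V → ℝ, (∀ v ∈ u, 0 ≤ μ v) ∧ ∑ v ∈ u, μ v = 1 ∧
      ∀ i, ∑ v ∈ u, μ v * c i v < 0
  · exact Or.inr hμ
  left
  set O : Set (Fin k → ℝ) := {y | ∀ i, y i < 0} with hOdef
  set Φ : (V → ℝ) →ₗ[ℝ] (Fin k → ℝ) :=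
    LinearMap.pi (fun i => ∑ v ∈ u, c i v • LinearMap.proj v) with hΦdef
  have hΦapp : ∀ (μ : V → ℝ) (i : Fin k), Φ μ i = ∑ v ∈ u, c i v * μ v := by
    intro μ i
    simp [hΦdef, LinearMap.pi_apply, LinearMap.sum_apply, LinearMap.smul_apply, smul_eq_mul]
  set S : Set (V → ℝ) := {μ | (∀ v, 0 ≤ μ v) ∧ ∑ v ∈ u, μ v = 1} with hSdef
  have hSconv : Convex ℝ S := by
    intro μ hμ' ν hν' a b ha hb hab
    refine ⟨fun v => by
      simp only [Pi.add_apply, Pi.smul_apply, smul_eq_mul]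
      have h1 := hμ'.1 v; have h2 := hν'.1 v
      positivity, ?_⟩
    simp only [Pi.add_apply, Pi.smul_apply, smul_eq_mul]
    rw [Finset.sum_add_distrib, ← Finset.mul_sum, ← Finset.mul_sum, hμ'.2, hν'.2]
    linarith
  set K : Set (Fin k → ℝ) := Φ '' S with hKdef
  have hKconv : Convex ℝ K := hSconv.linear_image Φ
  have hOopen : IsOpen O := by
    have : O = ⋂ i, {y : Fin k → ℝ | y i < 0} := by
      ext y; simp [hOdef, Set.mem_iInter]
    rw [this]
    exact isOpen_iInter_of_finite fun i => (isOpen_Iio).preimage (continuous_apply i)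
  have hOconv : Convex ℝ O := by
    have : O = ⋂ i, {y : Fin k → ℝ | y i < 0} := by
      ext y; simp [hOdef, Set.mem_iInter]
    rw [this]
    exact convex_iInter fun i => convex_halfSpace_lt ⟨fun a b => rfl, fun r a => rfl⟩ 0
  have hdisj : Disjoint O K := by
    rw [Set.disjoint_left]
    rintro y hyO ⟨μ, hμS, rfl⟩
    refine hμ ⟨μ, fun v _ => hμS.1 v, hμS.2, fun i => ?_⟩
    have := hyO i
    rw [hΦapp] at this
    calc ∑ v ∈ u, μ v * c i v = ∑ v ∈ u, c i v * μ v := by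
          exact Finset.sum_congr rfl fun v _ => mul_comm _ _
    _ < 0 := this
  obtain ⟨g, u0, hO, hK⟩ := geometric_hahn_banach_open hOconv hOopen hKconv hdisj
  set e : Fin k → (Fin k → ℝ) := fun i => fun j => if i = j then 1 else 0 with hedef
  set lam : Fin k → ℝ := fun i => g (e i) with hlamdef
  have hdecomp : ∀ y : Fin k → ℝ, g y = ∑ i, y i * lam i := by
    intro y
    conv_lhs => rw [pi_eq_sum_univ y]
    rw [map_sum]
    exact Finset.sum_congr rfl fun i _ => by rw [map_smul, smul_eq_mul]
  set a : ℝ := g (fun _ => (-1:ℝ)) with hadef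
  have ha : a = -∑ i, lam i := by
    rw [hadef, hdecomp]
    simp [Finset.sum_neg_distrib]
  -- each lam i ≥ 0
  have hlamnn : ∀ i, 0 ≤ lam i := by
    intro i1
    by_contra hli
    push_neg at hli
    set T : ℝ := max 1 ((u0 - a + 1) / (-lam i1)) with hTdef
    have hT1 : (1:ℝ) ≤ T := le_max_left _ _
    have hT0 : 0 < T := lt_of_lt_of_le one_pos hT1
    have hTge : (u0 - a + 1) / (-lam i1) ≤ T := le_max_right _ _
    have hTmul : u0 - a + 1 ≤ T * (-lam i1) := by
      rw [div_le_iff₀ (by linarith : (0:ℝ) < -lam i1)] at hTge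
      linarith
    set yT : Fin k → ℝ := (fun _ => (-1:ℝ)) + (-T) • e i1 with hyTdef
    have hyTO : yT ∈ O := by
      intro j
      simp only [hyTdef, Pi.add_apply, Pi.smul_apply, hedef, smul_eq_mul]
      by_cases hj : i1 = j <;> simp [hj] <;> linarith
    have hgy : g yT = a + T * (-lam i1) := by
      simp only [hyTdef, map_add, map_smul, smul_eq_mul, ← hadef, ← hlamdef]
      ring
    have := hO yT hyTO
    rw [hgy] at this
    linarith
  -- ε * a < u0 for all ε > 0
  have hesc : ∀ ε : ℝ, 0 < ε → ε * a < u0 := by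
    intro ε hε
    have hmem : (fun _ => -ε : Fin k → ℝ) ∈ O := fun i => by simp [hε]
    have : (fun _ => -ε : Fin k → ℝ) = ε • (fun _ => (-1:ℝ)) := by
      funext j; simp [smul_eq_mul]
    have hg := hO _ hmem
    rw [this, map_smul, smul_eq_mul] at hg
    exact hg
  have hu0 : 0 ≤ u0 := by
    by_contra h
    push_neg at h
    have ha0 : a ≤ 0 := by
      rw [ha]
      simp only [neg_nonpos]
      exact Finset.sum_nonneg fun i _ => hlamnn i
    rcases eq_or_lt_of_le ha0 with haz | haneg
    · have h1 := hesc 1 one_pos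
      rw [haz, mul_zero] at h1
      linarith
    · have hεpos : 0 < u0 / (2 * a) := div_pos_of_neg_of_neg (by linarith) (by linarith)
      have h1 := hesc _ hεpos
      have hmul : (u0 / (2 * a)) * a = u0 / 2 := by
        rw [div_mul_eq_mul_div, mul_comm 2 a, ← div_div, mul_div_assoc,
          div_self (ne_of_lt haneg), mul_one]
      rw [hmul] at h1
      linarith
  -- membership of vertex images
  have hvert : ∀ v ∈ u, (fun i => c i v) ∈ K := by
    intro v hv
    refine ⟨fun w => if w = v then 1 else 0,
      ⟨fun w => by by_cases h : w = v <;> simp [h], by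
        rw [Finset.sum_ite_eq' u v (fun _ => (1:ℝ))]
        simp [hv]⟩, ?_⟩
    funext i
    rw [hΦapp]
    have : ∀ w ∈ u, c i w * (if w = v then (1:ℝ) else 0) =
        if w = v then c i v else 0 := by
      intro w _
      by_cases hwv : w = v <;> simp [hwv]
    rw [Finset.sum_congr rfl this, Finset.sum_ite_eq' u v (fun w => c i v)]
    simp [hv]
  -- sum of lam > 0
  have hslam : 0 < ∑ i, lam i := by
    rcases eq_or_lt_of_le (Finset.sum_nonneg fun i _ => hlamnn i) with hz | hp
    · exfalso
      have hzero : ∀ i, lam i = 0 := by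
        intro i
        have := Finset.sum_eq_zero_iff_of_nonneg (fun j _ => hlamnn j) |>.mp hz.symm
        exact this i (Finset.mem_univ i)
      have haz : a = 0 := by rw [ha, ← hz, neg_zero]
      have h1 := hesc 1 one_pos
      rw [haz, mul_zero] at h1
      obtain ⟨v0, hv0⟩ := hu
      have := hK _ (hvert v0 hv0)
      rw [hdecomp] at this
      have : u0 ≤ 0 := this.trans_eq (by simp [hzero])
      linarith
    · exact hp
  refine ⟨fun i => lam i / (∑ j, lam j), ⟨fun i => div_nonneg (hlamnn i) hslam.le, ?_⟩, ?_⟩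
  · rw [← Finset.sum_div, div_self hslam.ne']
  · intro v hv
    have hle := (hu0.trans (hK _ (hvert v hv)))
    rw [hdecomp] at hle
    have h0 : 0 ≤ ∑ i, (fun i => c i v) i * lam i := hle
    have hrw : ∑ i, (lam i / (∑ j, lam j)) * c i v
        = (∑ i, (fun i => c i v) i * lam i) / (∑ j, lam j) := by
      rw [Finset.sum_div]
      exact Finset.sum_congr rfl fun i _ => by ring
    rw [hrw]
    exact div_nonneg h0 hslam.le

section HB
variable {H : Type*} [NormedAddCommGroup H] [InnerProductSpace ℝ H] [CompleteSpace H]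

lemma decompose {k : ℕ} {f : Fin k → H → ℝ} {x : H}
    (hlip : ∀ i, LocallyLipschitzNear (f i) x)
    (l : Fin k → ℝ) (hl0 : ∀ i, 0 ≤ l i)
    (hpos : ∀ v : H, 0 ≤ ∑ i, l i * clarkeDir (f i) x v) :
    ∃ w : Fin k → H, (∑ i, w i = 0) ∧ ∀ i, ∀ v, ⟪w i, v⟫ ≤ l i * clarkeDir (f i) x v := by
  classical
  set N : (Fin k → H) → ℝ := fun z => ∑ i, l i * clarkeDir (f i) x (z i) with hNdef
  have N_hom : ∀ c : ℝ, 0 < c → ∀ z, N (c • z) = c * N z := by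
    intro c hc z
    simp only [hNdef, Pi.smul_apply]
    rw [Finset.mul_sum]
    refine Finset.sum_congr rfl fun i _ => ?_
    rw [clarkeDir_smul (hlip i) hc.le]
    ring
  have N_add : ∀ z y, N (z + y) ≤ N z + N y := by
    intro z y
    simp only [hNdef, Pi.add_apply]
    rw [← Finset.sum_add_distrib]
    refine Finset.sum_le_sum fun i _ => ?_
    have := clarkeDir_add_le (hlip i) (z i) (y i)
    calc l i * clarkeDir (f i) x (z i + y i)
        ≤ l i * (clarkeDir (f i) x (z i) + clarkeDir (f i) x (y i)) :=
          mul_le_mul_of_nonneg_left this (hl0 i)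
    _ = l i * clarkeDir (f i) x (z i) + l i * clarkeDir (f i) x (y i) := by ring
  set diag : H →ₗ[ℝ] (Fin k → H) := LinearMap.pi (fun _ => LinearMap.id) with hdiagdef
  set p : Submodule ℝ (Fin k → H) := LinearMap.range diag with hpdef
  set f0 : (Fin k → H) →ₗ.[ℝ] ℝ := (0 : (Fin k → H) →ₗ[ℝ] ℝ).toPMap p with hf0def
  have hf : ∀ z : f0.domain, f0 z ≤ N z := by
    rintro ⟨z, hz⟩
    obtain ⟨v, rfl⟩ := hz
    have : f0 ⟨diag v, ⟨v, rfl⟩⟩ = 0 := rfl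
    rw [this]
    exact hpos v
  obtain ⟨g, hg0, hgle⟩ := exists_extension_of_le_sublinear f0 N N_hom N_add hf
  -- bounds for continuity
  have hCs : ∀ i : Fin k, ∃ C : ℝ, 0 ≤ C ∧ ∀ v : H, |clarkeDir (f i) x v| ≤ C * ‖v‖ := by
    intro i
    obtain ⟨C, hC0, hC⟩ := exists_dq_bound (hlip i)
    refine ⟨C, hC0, fun v => abs_le.mpr ⟨?_, clarkeDir_le_of (hC v)⟩⟩
    have := neg_le_clarkeDir_of (hC v)
    linarith
  choose C hC0 hC using hCs
  set gi : Fin k → (H →ₗ[ℝ] ℝ) :=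
    fun i => g ∘ₗ LinearMap.single ℝ (fun _ : Fin k => H) i with hgidef
  have hNsingle : ∀ (i : Fin k) (v : H), N (Pi.single i v) = l i * clarkeDir (f i) x v := by
    intro i v
    simp only [hNdef]
    rw [Finset.sum_eq_single i]
    · rw [Pi.single_eq_same]
    · intro j _ hji
      rw [Pi.single_eq_of_ne hji, clarkeDir_zero, mul_zero]
    · intro h; exact absurd (Finset.mem_univ i) h
  have hgi_le : ∀ (i : Fin k) (v : H), gi i v ≤ l i * clarkeDir (f i) x v := by
    intro i v
    have := hgle (Pi.single i v)
    rwa [hNsingle] at this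
  have hgi_bound : ∀ (i : Fin k) (v : H), ‖gi i v‖ ≤ (l i * C i) * ‖v‖ := by
    intro i v
    rw [Real.norm_eq_abs, abs_le]
    constructor
    · have h1 : gi i (-v) ≤ l i * clarkeDir (f i) x (-v) := hgi_le i (-v)
      have h2 : clarkeDir (f i) x (-v) ≤ C i * ‖v‖ := by
        have := (abs_le.mp (hC i (-v))).2
        rwa [norm_neg] at this
      have h3 : gi i (-v) = -(gi i v) := by rw [map_neg]
      have h4 : l i * clarkeDir (f i) x (-v) ≤ l i * (C i * ‖v‖) :=
        mul_le_mul_of_nonneg_left h2 (hl0 i)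
      rw [h3] at h1
      nlinarith [h1.trans h4]
    · have h2 : clarkeDir (f i) x v ≤ C i * ‖v‖ := (abs_le.mp (hC i v)).2
      have h4 : l i * clarkeDir (f i) x v ≤ l i * (C i * ‖v‖) :=
        mul_le_mul_of_nonneg_left h2 (hl0 i)
      nlinarith [(hgi_le i v).trans h4]
  set giC : Fin k → (H →L[ℝ] ℝ) :=
    fun i => LinearMap.mkContinuous (gi i) ((l i * C i)) (hgi_bound i) with hgiCdef
  set w : Fin k → H := fun i => (InnerProductSpace.toDual ℝ H).symm (giC i) with hwdef
  have hwinner : ∀ (i : Fin k) (v : H), ⟪w i, v⟫ = gi i v := by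
    intro i v
    rw [hwdef]
    exact InnerProductSpace.toDual_symm_apply
  refine ⟨w, ?_, fun i v => by rw [hwinner]; exact hgi_le i v⟩
  have hsum0 : ∀ z : H, ⟪∑ i, w i, z⟫ = 0 := by
    intro z
    rw [sum_inner]
    have h1 : ∀ i, ⟪w i, z⟫ = g (Pi.single i z) := fun i => hwinner i z
    rw [Finset.sum_congr rfl fun i _ => h1 i, ← map_sum]
    have h2 : (∑ i, Pi.single i z) = (fun _ => z : Fin k → H) := by
      have := Finset.univ_sum_single (fun _ => z : Fin k → H)
      exact this
    rw [h2]
    have hmem : (fun _ => z : Fin k → H) ∈ p := ⟨z, rfl⟩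
    have := hg0 ⟨(fun _ => z : Fin k → H), hmem⟩
    rw [this]
    rfl
  have := hsum0 (∑ i, w i)
  rwa [real_inner_self_eq_norm_sq, pow_eq_zero_iff, norm_eq_zero] at this
  norm_num

end HB



/-- If `x` is locally weakly Pareto optimal for locally Lipschitz `f_1,…,f_k`, then
`0 ∈ convexHull (⋃ i, ∂f_i(x))`. -/
theorem stmt0 {H : Type*} [NormedAddCommGroup H] [InnerProductSpace ℝ H] [CompleteSpace H]
    {k : ℕ} (f : Fin k → H → ℝ) (x : H)
    (hlip : ∀ i, LocallyLipschitzNear (f i) x)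
    (hpareto : ∃ δ > 0, ¬ ∃ x' : H, ‖x' - x‖ < δ ∧ ∀ i, f i x' < f i x) :
    (0 : H) ∈ convexHull ℝ (⋃ i : Fin k, clarkeSubdiff (f i) x) := by
  classical
  obtain ⟨δ, hδ, hpar⟩ := hpareto
  rcases Nat.eq_zero_or_pos k with hk0 | hk
  · exact absurd ⟨x, by simpa using hδ, fun i => absurd (i.2.trans_eq hk0) (Nat.not_lt_zero _)⟩ hpar
  have hA : ∀ v : H, ∃ i, 0 ≤ clarkeDir (f i) x v := fun v => stepA hlip hδ hpar v
  set P : Fin k → H → ℝ := fun i v => clarkeDir (f i) x v with hPdef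
  set t : H → Set (Fin k → ℝ) := fun v => {l | 0 ≤ ∑ i, l i * P i v} with htdef
  have htc : ∀ v, IsClosed (t v) := by
    intro v
    apply isClosed_le continuous_const
    exact continuous_finset_sum _ fun i _ => (continuous_apply i).mul continuous_const
  have hfin : ∀ u : Finset H, (stdSimplex ℝ (Fin k) ∩ ⋂ v ∈ u, t v).Nonempty := by
    intro u
    rcases matrix_alt hk u P with ⟨l, hl, hlt⟩ | ⟨μ, hμ0, hμ1, hμlt⟩
    · exact ⟨l, hl, Set.mem_iInter₂.mpr fun v hv => hlt v hv⟩
    · exfalso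
      obtain ⟨i, hi⟩ := hA (∑ v ∈ u, μ v • v)
      have hle := clarkeDir_sum_le (hlip i) u μ (fun j hj => hμ0 j hj) id
      simp only [id] at hle
      have := hμlt i
      have hPi : P i (∑ v ∈ u, μ v • v) ≤ ∑ v ∈ u, μ v * P i v := hle
      have h2 : ∑ v ∈ u, μ v * P i v < 0 := this
      rw [hPdef] at hPi
      simp only at hPi hi
      linarith
  obtain ⟨l, hlS, hlI⟩ :=
    (isCompact_stdSimplex ℝ (Fin k)).inter_iInter_nonempty t htc hfin
  have hpos : ∀ v : H, 0 ≤ ∑ i, l i * clarkeDir (f i) x v := by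
    intro v
    have := Set.mem_iInter.mp hlI v
    exact this
  obtain ⟨w, hwsum, hwle⟩ := decompose hlip l (fun i => hlS.1 i) hpos
  -- zero weights give zero vectors
  have hwzero : ∀ i, l i = 0 → w i = 0 := by
    intro i hli
    have h : ∀ v, ⟪w i, v⟫ ≤ 0 := by
      intro v
      have := hwle i v
      rwa [hli, zero_mul] at this
    have := h (w i)
    rw [real_inner_self_eq_norm_sq] at this
    have hn : ‖w i‖ = 0 := by nlinarith [norm_nonneg (w i)]
    exact norm_eq_zero.mp hn
  set s : Finset (Fin k) := Finset.univ.filter (fun i => l i ≠ 0) with hsdef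
  set uvec : Fin k → H := fun i => (l i)⁻¹ • w i with huvecdef
  have hsums : ∑ i ∈ s, l i = 1 := by
    rw [hsdef, Finset.sum_filter_ne_zero]
    exact hlS.2
  have hmemdiff : ∀ i ∈ s, uvec i ∈ ⋃ j : Fin k, clarkeSubdiff (f j) x := by
    intro i his
    have hli : l i ≠ 0 := (Finset.mem_filter.mp his).2
    have hlipos : 0 < l i := lt_of_le_of_ne (hlS.1 i) (Ne.symm hli)
    refine Set.mem_iUnion.mpr ⟨i, fun v => ?_⟩
    rw [huvecdef]
    simp only [real_inner_smul_left]
    calc (l i)⁻¹ * ⟪w i, v⟫ ≤ (l i)⁻¹ * (l i * clarkeDir (f i) x v) :=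
          mul_le_mul_of_nonneg_left (hwle i v) (inv_nonneg.mpr hlipos.le)
    _ = clarkeDir (f i) x v := by
        rw [← mul_assoc, inv_mul_cancel₀ hli, one_mul]
  have hcm := Finset.centerMass_mem_convexHull s
    (fun i _ => hlS.1 i) (by rw [hsums]; norm_num) hmemdiff
  have hcmeq : s.centerMass l uvec = 0 := by
    rw [Finset.centerMass, hsums]
    have : ∑ i ∈ s, l i • uvec i = ∑ i ∈ s, w i := by
      refine Finset.sum_congr rfl fun i his => ?_
      have hli : l i ≠ 0 := (Finset.mem_filter.mp his).2
      rw [huvecdef]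
      rw [smul_smul, mul_inv_cancel₀ hli, one_smul]
    rw [this]
    have : ∑ i ∈ s, w i = ∑ i, w i := by
      apply Finset.sum_subset (Finset.subset_univ s)
      intro i _ hnotin
      have : l i = 0 := by
        by_contra h
        exact hnotin (Finset.mem_filter.mpr ⟨Finset.mem_univ i, h⟩)
      exact hwzero i this
    rw [this, hwsum, smul_zero]
  rwa [hcmeq] at hcm
end

section
/- Let H be a real Hilbert space, x ∈ H, and let f : H → ℝ be Lipschitz with some constant L on the open ball of radius ε̄ > 0 around x. Then for every ε ∈ [0, ε̄), the Goldstein ε-subdifferential ∂_ε f(x) is nonempty, convex, and compact in the weak topology on H. -/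
open Filter Topology RealInnerProductSpace

namespace ClarkeAux

open Metric Set Filter

variable {H : Type*} [NormedAddCommGroup H] [InnerProductSpace ℝ H]

noncomputable def dq (f : H → ℝ) (v : H) (p : H × ℝ) : ℝ := (f (p.1 + p.2 • v) - f p.1) / p.2

noncomputable abbrev Φ (y : H) : Filter (H × ℝ) := (𝓝 y) ×ˢ (𝓝[>] (0 : ℝ))

lemma clarkeDir_eq (f : H → ℝ) (y v : H) : clarkeDir f y v = limsup (dq f v) (Φ y) := rfl

variable {f : H → ℝ} {x : H} {εbar : ℝ} {L : NNReal}

lemma ev_abs (hlip : LipschitzOnWith L f (ball x εbar)) {y : H} (hy : y ∈ ball x εbar) (v : H) :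
    ∀ᶠ p in Φ y, |dq f v p| ≤ L * ‖v‖ := by
  have hy' : dist y x < εbar := mem_ball.1 hy
  set δ : ℝ := εbar - dist y x with hδdef
  have hδ : 0 < δ := by simp [hδdef]; linarith
  have h1 : Metric.ball y (δ/2) ∈ 𝓝 y := Metric.ball_mem_nhds _ (by positivity)
  have h2 : Set.Ioo (0:ℝ) (δ/(2*(‖v‖+1))) ∈ 𝓝[>] (0:ℝ) :=
    Ioo_mem_nhdsGT_of_mem ⟨le_refl _, by positivity⟩
  filter_upwards [Filter.prod_mem_prod h1 h2] with p hp
  obtain ⟨hp1, hp2⟩ := hp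
  have ht : 0 < p.2 := hp2.1
  have hvpos : (0:ℝ) < ‖v‖ + 1 := by positivity
  have hvb : p.2 * ‖v‖ < δ/2 := by
    have h3 : p.2 * ‖v‖ ≤ p.2 * (‖v‖+1) := by nlinarith [ht.le]
    have h4 : p.2 * (‖v‖+1) < (δ/(2*(‖v‖+1))) * (‖v‖+1) :=
      mul_lt_mul_of_pos_right hp2.2 hvpos
    have h5 : (δ/(2*(‖v‖+1))) * (‖v‖+1) = δ/2 := by field_simp
    linarith
  have hd1 : dist p.1 y < δ/2 := mem_ball.1 hp1
  have hx1 : p.1 ∈ ball x εbar := by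
    rw [mem_ball]
    have := dist_triangle p.1 y x
    linarith
  have hnsmul : ‖p.2 • v‖ = p.2 * ‖v‖ := by
    rw [norm_smul, Real.norm_eq_abs, abs_of_pos ht]
  have hx2 : p.1 + p.2 • v ∈ ball x εbar := by
    rw [mem_ball]
    have h6 : dist (p.1 + p.2 • v) x ≤ dist (p.1 + p.2 • v) p.1 + dist p.1 x :=
      dist_triangle _ _ _
    have h7 : dist (p.1 + p.2 • v) p.1 = p.2 * ‖v‖ := by rw [dist_self_add_left, hnsmul]
    have := dist_triangle p.1 y x
    linarith
  have key : |f (p.1 + p.2 • v) - f p.1| ≤ (L : ℝ) * (p.2 * ‖v‖) := by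
    have h8 := hlip.dist_le_mul _ hx2 _ hx1
    rwa [Real.dist_eq, dist_self_add_left, hnsmul] at h8
  show |(f (p.1 + p.2 • v) - f p.1) / p.2| ≤ (L : ℝ) * ‖v‖
  rw [abs_div, abs_of_pos ht, div_le_iff₀ ht]
  calc |f (p.1 + p.2 • v) - f p.1| ≤ (L : ℝ) * (p.2 * ‖v‖) := key
    _ = (L:ℝ) * ‖v‖ * p.2 := by ring

lemma bddAbove_dq (hlip : LipschitzOnWith L f (ball x εbar)) {y : H} (hy : y ∈ ball x εbar)
    (v : H) : IsBoundedUnder (· ≤ ·) (Φ y) (dq f v) :=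
  isBoundedUnder_of_eventually_le ((ev_abs hlip hy v).mono fun _ hp => (abs_le.1 hp).2)

lemma bddBelow_dq (hlip : LipschitzOnWith L f (ball x εbar)) {y : H} (hy : y ∈ ball x εbar)
    (v : H) : IsBoundedUnder (· ≥ ·) (Φ y) (dq f v) :=
  isBoundedUnder_of_eventually_ge ((ev_abs hlip hy v).mono fun _ hp => (abs_le.1 hp).1)

lemma clarkeDir_le_lip (hlip : LipschitzOnWith L f (ball x εbar)) {y : H}
    (hy : y ∈ ball x εbar) (v : H) : clarkeDir f y v ≤ L * ‖v‖ :=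
  limsup_le_of_le (bddBelow_dq hlip hy v).isCoboundedUnder_le
    ((ev_abs hlip hy v).mono fun _ hp => (abs_le.1 hp).2)

lemma neg_lip_le_clarkeDir (hlip : LipschitzOnWith L f (ball x εbar)) {y : H}
    (hy : y ∈ ball x εbar) (v : H) : -((L:ℝ) * ‖v‖) ≤ clarkeDir f y v :=
  le_limsup_of_frequently_le
    (((ev_abs hlip hy v).mono fun _ hp => (abs_le.1 hp).1).frequently)
    (bddAbove_dq hlip hy v)

lemma tendsto_shift (y v : H) :
    Tendsto (fun p : H × ℝ => (p.1 + p.2 • v, p.2)) (Φ y) (Φ y) := by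
  refine Tendsto.prodMk ?_ tendsto_snd
  have h1 : Tendsto (fun p : H × ℝ => p.1) (Φ y) (𝓝 y) := tendsto_fst
  have h2 : Tendsto (fun p : H × ℝ => p.2) (Φ y) (𝓝 (0:ℝ)) :=
    tendsto_snd.mono_right nhdsWithin_le_nhds
  simpa using h1.add (h2.smul_const v)

lemma limsup_comp_le (hlip : LipschitzOnWith L f (ball x εbar)) {y : H}
    (hy : y ∈ ball x εbar) (v : H) {m : H × ℝ → H × ℝ} (hm : Tendsto m (Φ y) (Φ y)) :
    limsup (dq f v ∘ m) (Φ y) ≤ clarkeDir f y v := by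
  have hev := hm.eventually (ev_abs hlip hy v)
  have heq : limsup (dq f v ∘ m) (Φ y) = limsup (dq f v) (Filter.map m (Φ y)) := by
    rw [Filter.limsup, Filter.limsup, ← Filter.map_map]
  rw [heq, clarkeDir_eq]
  refine limsup_le_limsup_of_le hm ?_ (bddAbove_dq hlip hy v)
  have : NeBot (Filter.map m (Φ y)) := Filter.map_neBot
  refine IsBoundedUnder.isCoboundedUnder_le ?_
  exact isBoundedUnder_of_eventually_ge
    (Filter.eventually_map.2 (hev.mono fun p hp => (abs_le.1 hp).1))

lemma clarkeDir_add_le (hlip : LipschitzOnWith L f (ball x εbar)) {y : H}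
    (hy : y ∈ ball x εbar) (v w : H) :
    clarkeDir f y (v + w) ≤ clarkeDir f y v + clarkeDir f y w := by
  set m : H × ℝ → H × ℝ := fun p => (p.1 + p.2 • v, p.2) with hmdef
  have hm : Tendsto m (Φ y) (Φ y) := tendsto_shift y v
  have hfun : dq f (v + w) = (dq f w ∘ m) + dq f v := by
    funext p
    simp only [dq, Pi.add_apply, Function.comp_apply, hmdef, smul_add]
    rw [← add_div, ← add_assoc]
    ring_nf
  have hevm := hm.eventually (ev_abs hlip hy w)
  have hb1 : IsBoundedUnder (· ≥ ·) (Φ y) (dq f w ∘ m) :=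
    isBoundedUnder_of_eventually_ge (hevm.mono fun p hp => (abs_le.1 hp).1)
  have hb2 : IsBoundedUnder (· ≤ ·) (Φ y) (dq f w ∘ m) :=
    isBoundedUnder_of_eventually_le (hevm.mono fun p hp => (abs_le.1 hp).2)
  have h := limsup_add_le hb1 hb2
    (bddBelow_dq hlip hy v).isCoboundedUnder_le (bddAbove_dq hlip hy v)
  rw [clarkeDir_eq, hfun]
  calc limsup ((dq f w ∘ m) + dq f v) (Φ y)
      ≤ limsup (dq f w ∘ m) (Φ y) + limsup (dq f v) (Φ y) := h
    _ ≤ clarkeDir f y w + clarkeDir f y v :=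
        add_le_add (limsup_comp_le hlip hy w hm) le_rfl
    _ = clarkeDir f y v + clarkeDir f y w := add_comm _ _

lemma clarkeDir_smul_le (hlip : LipschitzOnWith L f (ball x εbar)) {y : H}
    (hy : y ∈ ball x εbar) (v : H) {c : ℝ} (hc : 0 < c) :
    clarkeDir f y (c • v) ≤ c * clarkeDir f y v := by
  set n : H × ℝ → H × ℝ := fun p => (p.1, c * p.2) with hndef
  have hnt : Tendsto n (Φ y) (Φ y) := by
    refine Tendsto.prodMk tendsto_fst ?_
    have h1 : Tendsto (fun t : ℝ => c * t) (𝓝[>] (0:ℝ)) (𝓝[>] (0:ℝ)) := by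
      apply tendsto_nhdsWithin_of_tendsto_nhds_of_eventually_within
      · simpa using ((continuous_mul_left c).tendsto (0:ℝ)).mono_left
          nhdsWithin_le_nhds
      · filter_upwards [self_mem_nhdsWithin] with t ht
        exact mul_pos hc ht
    exact h1.comp tendsto_snd
  have hkey : ∀ a t : ℝ, c * (a / (c * t)) = a / t := by
    intro a t
    rcases eq_or_ne t 0 with rfl | ht
    · simp
    · field_simp
  have hfun : dq f (c • v) = fun p => c * (dq f v (n p)) := by
    funext p
    simp only [dq, hndef]
    rw [hkey]
    congr 2
    rw [smul_smul, mul_comm, ← smul_smul]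
  have habs : ∀ᶠ p in Φ y, |dq f v (n p)| ≤ (L:ℝ) * ‖v‖ := hnt.eventually (ev_abs hlip hy v)
  have hb1 : IsBoundedUnder (· ≤ ·) (Φ y) (fun p => dq f v (n p)) :=
    isBoundedUnder_of_eventually_le (habs.mono fun p hp => (abs_le.1 hp).2)
  have hb2 : IsBoundedUnder (· ≥ ·) (Φ y) (fun p => dq f v (n p)) :=
    isBoundedUnder_of_eventually_ge (habs.mono fun p hp => (abs_le.1 hp).1)
  have hb3 : IsBoundedUnder (· ≤ ·) (Φ y) (fun p => c * dq f v (n p)) :=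
    isBoundedUnder_of_eventually_le (habs.mono fun p hp => by
      have := (abs_le.1 hp).2
      exact (mul_le_mul_of_nonneg_left this hc.le : c * _ ≤ c * ((L:ℝ) * ‖v‖)))
  have hb4 : IsBoundedUnder (· ≥ ·) (Φ y) (fun p => c * dq f v (n p)) :=
    isBoundedUnder_of_eventually_ge (habs.mono fun p hp => by
      have := (abs_le.1 hp).1
      exact (mul_le_mul_of_nonneg_left this hc.le : c * _ ≤ c * _))
  have e : ℝ ≃o ℝ := OrderIso.mulLeft₀ c hc
  have hiso := (OrderIso.mulLeft₀ c hc).limsup_apply (f := Φ y)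
    (u := fun p => dq f v (n p)) hb1 hb2.isCoboundedUnder_le hb3 hb4.isCoboundedUnder_le
  simp only [OrderIso.mulLeft₀_apply] at hiso
  rw [clarkeDir_eq, hfun, ← hiso]
  exact mul_le_mul_of_nonneg_left (limsup_comp_le hlip hy v hnt) hc.le

lemma clarkeDir_smul (hlip : LipschitzOnWith L f (ball x εbar)) {y : H}
    (hy : y ∈ ball x εbar) (v : H) {c : ℝ} (hc : 0 < c) :
    clarkeDir f y (c • v) = c * clarkeDir f y v := by
  refine le_antisymm (clarkeDir_smul_le hlip hy v hc) ?_
  have h2 := clarkeDir_smul_le hlip hy (c • v) (inv_pos.2 hc)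
  rw [smul_smul, inv_mul_cancel₀ hc.ne', one_smul] at h2
  calc c * clarkeDir f y v ≤ c * (c⁻¹ * clarkeDir f y (c • v)) :=
        mul_le_mul_of_nonneg_left h2 hc.le
    _ = clarkeDir f y (c • v) := by field_simp

lemma clarkeSubdiff_nonempty [CompleteSpace H] (hlip : LipschitzOnWith L f (ball x εbar))
    {y : H} (hy : y ∈ ball x εbar) : (clarkeSubdiff f y).Nonempty := by
  obtain ⟨g, -, hg⟩ := exists_extension_of_le_sublinear
    (⟨⊥, 0⟩ : H →ₗ.[ℝ] ℝ) (fun v => clarkeDir f y v)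
    (fun c hc v => clarkeDir_smul hlip hy v hc)
    (fun v w => clarkeDir_add_le hlip hy v w)
    (fun z => by
      have hz : (z : H) = 0 := by exact_mod_cast (Submodule.mem_bot ℝ).1 z.2
      have h0 := neg_lip_le_clarkeDir hlip hy (0 : H)
      simp only [norm_zero, mul_zero, neg_zero] at h0
      simpa [hz] using h0)
  have hbound : ∀ z : H, ‖g z‖ ≤ (L : ℝ) * ‖z‖ := by
    intro z
    rw [Real.norm_eq_abs, abs_le]
    constructor
    · have h1 := (hg (-z)).trans (clarkeDir_le_lip hlip hy (-z))
      rw [map_neg, norm_neg] at h1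
      linarith
    · exact (hg z).trans (clarkeDir_le_lip hlip hy z)
  set g' : H →L[ℝ] ℝ := LinearMap.mkContinuous g (L : ℝ) hbound with hg'def
  refine ⟨(InnerProductSpace.toDual ℝ H).symm g', fun v => ?_⟩
  rw [InnerProductSpace.toDual_symm_apply]
  exact hg v

lemma subdiff_norm_le (hlip : LipschitzOnWith L f (ball x εbar)) {y : H}
    (hy : y ∈ ball x εbar) {w : H} (hw : w ∈ clarkeSubdiff f y) : ‖w‖ ≤ L := by
  have h := (hw w).trans (clarkeDir_le_lip hlip hy w)
  rw [real_inner_self_eq_norm_sq] at h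
  nlinarith [norm_nonneg w, L.coe_nonneg]

end ClarkeAux

namespace ClarkeAux

variable {H : Type*} [NormedAddCommGroup H] [InnerProductSpace ℝ H] [CompleteSpace H]

noncomputable def ψ : H → WeakDual ℝ H :=
  fun w => StrongDual.toWeakDual (InnerProductSpace.toDual ℝ H w)

lemma weakTop_eq : weakTopology H = TopologicalSpace.induced (ψ (H := H)) inferInstance := by
  have h1 : (inferInstance : TopologicalSpace (WeakDual ℝ H)) =
      TopologicalSpace.induced (fun (g : WeakDual ℝ H) (z : H) => topDualPairing ℝ H g z)
        Pi.topologicalSpace := rfl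
  rw [h1, induced_compose, induced_to_pi]
  exact iInf_congr fun v => by congr 1

lemma image_closed {S : Set H} (hconv : Convex ℝ S) (hcl : IsClosed S) :
    IsClosed (ψ '' S : Set (WeakDual ℝ H)) := by
  rw [← isOpen_compl_iff, isOpen_iff_mem_nhds]
  intro z hz
  have hw0 : (InnerProductSpace.toDual ℝ H).symm (WeakDual.toStrongDual z) ∉ S := by
    intro h
    exact hz ⟨_, h, by simp [ψ]⟩
  obtain ⟨φ, u, hus, hux⟩ := geometric_hahn_banach_closed_point hconv hcl hw0
  set wφ := (InnerProductSpace.toDual ℝ H).symm φ with hwφ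
  have hopen : IsOpen {z' : WeakDual ℝ H | u < z' wφ} :=
    isOpen_lt continuous_const (WeakDual.eval_continuous wφ)
  refine Filter.mem_of_superset (hopen.mem_nhds ?_) ?_
  · show u < z wφ
    have h2 : ⟪(InnerProductSpace.toDual ℝ H).symm (WeakDual.toStrongDual z), wφ⟫
        = WeakDual.toStrongDual z wφ := InnerProductSpace.toDual_symm_apply
    have h3 : ⟪wφ, (InnerProductSpace.toDual ℝ H).symm (WeakDual.toStrongDual z)⟫
        = φ ((InnerProductSpace.toDual ℝ H).symm (WeakDual.toStrongDual z)) :=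
      InnerProductSpace.toDual_symm_apply
    have h4 := real_inner_comm wφ ((InnerProductSpace.toDual ℝ H).symm (WeakDual.toStrongDual z))
    have h5 : WeakDual.toStrongDual z wφ = z wφ := rfl
    rw [← h5, ← h2, h4, h3]
    exact hux
  · intro z' hz'
    simp only [Set.mem_compl_iff]
    rintro ⟨a, ha, rfl⟩
    have h6 : ψ a wφ = ⟪a, wφ⟫ := InnerProductSpace.toDual_apply_apply
    have h7 : ⟪wφ, a⟫ = φ a := InnerProductSpace.toDual_symm_apply
    have := hus a ha
    have hz'' : u < ψ a wφ := hz'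
    rw [h6, real_inner_comm, h7] at hz''
    linarith

end ClarkeAux

/-- If `f` is Lipschitz on the open ball of radius `ε̄` around `x`, then for every
`ε ∈ [0, ε̄)` the Goldstein ε-subdifferential is nonempty, convex and weakly compact. -/
theorem stmt1 {H : Type*} [NormedAddCommGroup H] [InnerProductSpace ℝ H] [CompleteSpace H]
    (f : H → ℝ) (x : H) (εbar : ℝ) (hεbar : 0 < εbar) (L : NNReal)
    (hlip : LipschitzOnWith L f (Metric.ball x εbar))
    (ε : ℝ) (hε0 : 0 ≤ ε) (hε : ε < εbar) :
    (goldsteinSubdiff f ε x).Nonempty ∧ Convex ℝ (goldsteinSubdiff f ε x) ∧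
      @IsCompact H (weakTopology H) (goldsteinSubdiff f ε x) := by
  classical
  have hxball : x ∈ Metric.ball x εbar := Metric.mem_ball_self hεbar
  have hSconv : Convex ℝ (goldsteinSubdiff f ε x) := (convex_convexHull ℝ _).closure
  have hSclosed : IsClosed (goldsteinSubdiff f ε x) := isClosed_closure
  have hUsub : (⋃ y ∈ Metric.closedBall x ε, clarkeSubdiff f y) ⊆
      Metric.closedBall (0 : H) L := by
    intro w hw
    simp only [Set.mem_iUnion, exists_prop] at hw
    obtain ⟨y, hy, hw⟩ := hw
    have hyb : y ∈ Metric.ball x εbar := by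
      rw [Metric.mem_ball]
      exact lt_of_le_of_lt (Metric.mem_closedBall.1 hy) hε
    rw [Metric.mem_closedBall, dist_zero_right]
    exact ClarkeAux.subdiff_norm_le hlip hyb hw
  have hSsub : goldsteinSubdiff f ε x ⊆ Metric.closedBall (0 : H) L :=
    closure_minimal (convexHull_min hUsub (convex_closedBall _ _)) Metric.isClosed_closedBall
  refine ⟨?_, hSconv, ?_⟩
  · obtain ⟨w, hw⟩ := ClarkeAux.clarkeSubdiff_nonempty hlip hxball
    exact ⟨w, subset_closure (subset_convexHull ℝ _
      (Set.mem_biUnion (Metric.mem_closedBall_self hε0) hw))⟩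
  · letI : TopologicalSpace H := weakTopology H
    have hind : Topology.IsInducing (ClarkeAux.ψ (H := H)) := ⟨ClarkeAux.weakTop_eq⟩
    rw [hind.isCompact_iff]
    refine IsCompact.of_isClosed_subset
      (WeakDual.isCompact_closedBall (x' := 0) L)
      (ClarkeAux.image_closed hSconv hSclosed) ?_
    rintro - ⟨w, hwS, rfl⟩
    clear hind this
    show WeakDual.toStrongDual (ClarkeAux.ψ w) ∈ Metric.closedBall 0 (L : ℝ)
    rw [Metric.mem_closedBall, dist_zero_right]
    have hnorm : ‖WeakDual.toStrongDual (ClarkeAux.ψ w)‖ = ‖w‖ := by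
      simp [ClarkeAux.ψ]
    rw [hnorm]
    have := hSsub hwS
    rwa [Metric.mem_closedBall, dist_zero_right] at this
end

section
/- Let H be a real Hilbert space, let f : H → ℝ be locally Lipschitz near x ∈ H, let v ∈ H with v ≠ 0 and α ∈ ℝ. If α > ⟨w, v⟩ for all w ∈ ∂f(x), then there exists ε̄ > 0 such that for all ε with 0 ≤ ε ≤ ε̄ one has α > ⟨w, v⟩ for all w ∈ ∂_ε f(x). -/
open Filter Topology RealInnerProductSpace

namespace CDAux

open Metric Set

variable {H : Type*} [NormedAddCommGroup H] [InnerProductSpace ℝ H]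

/-- difference quotient -/
noncomputable def qd (f : H → ℝ) (v : H) : H × ℝ → ℝ :=
  fun p => (f (p.1 + p.2 • v) - f p.1) / p.2

noncomputable def FF (x : H) : Filter (H × ℝ) := (𝓝 x) ×ˢ (𝓝[>] (0 : ℝ))

instance (x : H) : (FF x).NeBot := Filter.prod_neBot.2 ⟨inferInstance, inferInstance⟩

lemma clarkeDir_eq (f : H → ℝ) (z u : H) : clarkeDir f z u = Filter.limsup (qd f u) (FF z) := rfl

lemma tendsto_mul_nhdsGT {c : ℝ} (hc : 0 < c) :
    Filter.Tendsto (fun t : ℝ => c * t) (𝓝[>] (0:ℝ)) (𝓝[>] (0:ℝ)) := by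
  apply tendsto_nhdsWithin_of_tendsto_nhds_of_eventually_within
  · have h0 : Filter.Tendsto (fun t : ℝ => c * t) (𝓝 (0:ℝ)) (𝓝 (c * 0)) :=
      (continuous_const.mul continuous_id).tendsto (0:ℝ)
    simpa using h0.mono_left nhdsWithin_le_nhds
  · filter_upwards [eventually_mem_nhdsWithin] with t (ht : (0:ℝ) < t)
    exact mul_pos hc ht

lemma map_mul_nhdsGT {c : ℝ} (hc : 0 < c) :
    Filter.map (fun t : ℝ => c * t) (𝓝[>] (0:ℝ)) = 𝓝[>] (0:ℝ) := by
  refine le_antisymm (tendsto_mul_nhdsGT hc) ?_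
  have h := Filter.map_mono (m := fun t : ℝ => c * t) (tendsto_mul_nhdsGT (c := c⁻¹) (by positivity))
  rw [Filter.map_map] at h
  have : ((fun t : ℝ => c * t) ∘ fun t : ℝ => c⁻¹ * t) = id := by
    funext t; simp [Function.comp, ← mul_assoc, mul_inv_cancel₀ hc.ne']
  rwa [this, Filter.map_id] at h

variable {f : H → ℝ} {x : H} {L : NNReal} {r : ℝ}

lemma qd_bound (hL : LipschitzOnWith L f (ball x r)) {z : H} (hz : z ∈ ball x r) (u : H) :
    ∀ᶠ p in FF z, |qd f u p| ≤ L * ‖u‖ := by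
  set s := r - dist z x with hs_def
  have hzx := mem_ball.1 hz
  have hs : 0 < s := by simp only [hs_def, sub_pos]; exact hzx
  have h1 : Metric.ball z (s/2) ∈ 𝓝 z := Metric.ball_mem_nhds _ (by positivity)
  have h2 : Set.Ioo (0:ℝ) (s/(2*(‖u‖+1))) ∈ 𝓝[>] (0:ℝ) :=
    Ioo_mem_nhdsGT_of_mem ⟨le_refl _, by positivity⟩
  filter_upwards [Filter.prod_mem_prod h1 h2] with p hp
  obtain ⟨hp1, hp2⟩ := hp
  have ht : 0 < p.2 := hp2.1
  have hp1' := mem_ball.1 hp1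
  have hy0 : dist p.1 x < s/2 + dist z x := by
    calc dist p.1 x ≤ dist p.1 z + dist z x := dist_triangle _ _ _
    _ < s/2 + dist z x := by linarith
  have hy : p.1 ∈ ball x r := by
    rw [mem_ball]; simp only [hs_def] at hy0 ⊢; linarith
  have hnorm : ‖p.2 • u‖ ≤ s/2 := by
    rw [norm_smul, Real.norm_eq_abs, abs_of_pos ht]
    have hrw : s/(2*(‖u‖+1)) = (s/2)/(‖u‖+1) := (div_div s 2 (‖u‖+1)).symm
    have key : p.2 * (‖u‖ + 1) < s / 2 :=
      (lt_div_iff₀ (by positivity)).1 (by rw [← hrw]; exact hp2.2)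
    nlinarith [ht.le, norm_nonneg u]
  have hd2 : dist (p.1 + p.2 • u) p.1 = p.2 * ‖u‖ := by
    rw [dist_eq_norm, add_sub_cancel_left, norm_smul, Real.norm_eq_abs, abs_of_pos ht]
  have hy2 : p.1 + p.2 • u ∈ ball x r := by
    rw [mem_ball]
    calc dist (p.1 + p.2 • u) x ≤ dist (p.1 + p.2 • u) p.1 + dist p.1 x := dist_triangle _ _ _
    _ = ‖p.2 • u‖ + dist p.1 x := by
        rw [hd2, norm_smul, Real.norm_eq_abs, abs_of_pos ht]
    _ < s/2 + (s/2 + dist z x) := by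
        have : ‖p.2 • u‖ ≤ s/2 := hnorm
        linarith
    _ ≤ r := by simp only [hs_def]; linarith
  have hdist := hL.dist_le_mul _ hy2 _ hy
  rw [Real.dist_eq, hd2] at hdist
  show |(f (p.1 + p.2 • u) - f p.1) / p.2| ≤ L * ‖u‖
  rw [abs_div, abs_of_pos ht, div_le_iff₀ ht]
  calc |f (p.1 + p.2 • u) - f p.1| ≤ L * (p.2 * ‖u‖) := hdist
  _ = ↑L * ‖u‖ * p.2 := by ring

lemma qd_bddAbove (hL : LipschitzOnWith L f (ball x r)) {z : H} (hz : z ∈ ball x r) (u : H) :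
    (FF z).IsBoundedUnder (· ≤ ·) (qd f u) :=
  ⟨(L : ℝ) * ‖u‖, Filter.eventually_map.2 <| by
    filter_upwards [qd_bound hL hz u] with p hp using (abs_le.1 hp).2⟩

lemma qd_bddBelow (hL : LipschitzOnWith L f (ball x r)) {z : H} (hz : z ∈ ball x r) (u : H) :
    (FF z).IsBoundedUnder (· ≥ ·) (qd f u) :=
  ⟨-((L : ℝ) * ‖u‖), Filter.eventually_map.2 <| by
    filter_upwards [qd_bound hL hz u] with p hp using (abs_le.1 hp).1⟩

lemma clarkeDir_zero (z : H) : clarkeDir f z 0 = 0 := by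
  rw [clarkeDir_eq]
  have h : qd f (0 : H) = fun _ => (0:ℝ) := by funext p; simp [qd]
  rw [h]
  exact Filter.limsup_const 0

lemma clarkeDir_le_bound (hL : LipschitzOnWith L f (ball x r)) {z : H} (hz : z ∈ ball x r)
    (u : H) : clarkeDir f z u ≤ L * ‖u‖ := by
  rw [clarkeDir_eq]
  refine Filter.limsup_le_of_le ((qd_bddBelow hL hz u).isCoboundedUnder_le) ?_
  filter_upwards [qd_bound hL hz u] with p hp using (abs_le.1 hp).2

lemma neg_bound_le_clarkeDir (hL : LipschitzOnWith L f (ball x r)) {z : H} (hz : z ∈ ball x r)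
    (u : H) : -((L:ℝ) * ‖u‖) ≤ clarkeDir f z u := by
  rw [clarkeDir_eq]
  refine Filter.le_limsup_of_frequently_le ?_ (qd_bddAbove hL hz u)
  exact Filter.Eventually.frequently <| by
    filter_upwards [qd_bound hL hz u] with p hp using (abs_le.1 hp).1

lemma clarkeDir_smul (hL : LipschitzOnWith L f (ball x r)) (hx : x ∈ ball x r)
    {c : ℝ} (hc : 0 < c) (u : H) : clarkeDir f x (c • u) = c * clarkeDir f x u := by
  have hφ : Filter.map (fun p : H × ℝ => (p.1, c * p.2)) (FF x) = FF x := by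
    have hid : (fun p : H × ℝ => (p.1, c * p.2)) = Prod.map id (fun t => c * t) := rfl
    rw [FF, hid, ← Filter.prod_map_map_eq', Filter.map_id, map_mul_nhdsGT hc]
  have hkey : qd f (c • u) =
      ((fun t : ℝ => c * t) ∘ qd f u) ∘ (fun p : H × ℝ => (p.1, c * p.2)) := by
    funext p
    simp only [qd, Function.comp, smul_smul]
    rw [mul_comm p.2 c, ← mul_div_assoc, mul_div_mul_left _ _ hc.ne']
  have hmono : Monotone (fun t : ℝ => c * t) := fun a b hab =>
    mul_le_mul_of_nonneg_left hab hc.le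
  rw [clarkeDir_eq, hkey, Filter.limsup_comp, hφ, clarkeDir_eq]
  exact (hmono.map_limsup_of_continuousAt (qd f u)
    ((continuous_const.mul continuous_id).continuousAt)
    (qd_bddAbove hL hx u) ((qd_bddBelow hL hx u).isCoboundedUnder_le)).symm

lemma clarkeDir_add (hL : LipschitzOnWith L f (ball x r)) (hx : x ∈ ball x r) (u w : H) :
    clarkeDir f x (u + w) ≤ clarkeDir f x u + clarkeDir f x w := by
  set ψ : H × ℝ → H × ℝ := fun p => (p.1 + p.2 • w, p.2) with hψ_def
  have hψ : Filter.Tendsto ψ (FF x) (FF x) := by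
    refine Filter.Tendsto.prodMk ?_ tendsto_snd
    have h2 : Filter.Tendsto (fun p : H × ℝ => p.2) (FF x) (𝓝 (0:ℝ)) :=
      tendsto_snd.mono_right nhdsWithin_le_nhds
    have := (tendsto_fst.add (h2.smul_const w))
    simp at this; exact this
  have hkey : qd f (u + w) = fun p => qd f u (ψ p) + qd f w p := by
    funext p
    simp only [qd, hψ_def]
    rw [← add_div]
    congr 1
    have harg : p.1 + p.2 • (u + w) = p.1 + p.2 • w + p.2 • u := by
      rw [smul_add]; abel
    rw [harg]; ring
  have hb1 : ∀ᶠ p in FF x, |qd f u (ψ p)| ≤ (L:ℝ) * ‖u‖ := hψ.eventually (qd_bound hL hx u)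
  have hcomp : Filter.limsup (fun p => qd f u (ψ p)) (FF x) ≤ Filter.limsup (qd f u) (FF x) := by
    have : Filter.limsup (fun p => qd f u (ψ p)) (FF x)
        = Filter.limsup (qd f u) (Filter.map ψ (FF x)) := Filter.limsup_comp (qd f u) ψ (FF x)
    rw [this]
    refine Filter.limsup_le_limsup_of_le hψ ?_ (qd_bddAbove hL hx u)
    exact Filter.isCoboundedUnder_le_of_eventually_le _ (Filter.eventually_map.2 <| by
      filter_upwards [hb1] with p hp using (abs_le.1 hp).1)
  calc clarkeDir f x (u + w)
      = Filter.limsup (fun p => qd f u (ψ p) + qd f w p) (FF x) := by rw [clarkeDir_eq, hkey]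
    _ ≤ Filter.limsup (fun p => qd f u (ψ p)) (FF x) + Filter.limsup (qd f w) (FF x) := by
        have heq : (fun p => qd f u (ψ p) + qd f w p)
            = (fun p => qd f u (ψ p)) + qd f w := rfl
        rw [heq]
        refine limsup_add_le
          ⟨-((L:ℝ) * ‖u‖), Filter.eventually_map.2 <| by
            filter_upwards [hb1] with p hp using (abs_le.1 hp).1⟩
          ⟨(L:ℝ) * ‖u‖, Filter.eventually_map.2 <| by
            filter_upwards [hb1] with p hp using (abs_le.1 hp).2⟩
          ((qd_bddBelow hL hx w).isCoboundedUnder_le)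
          (qd_bddAbove hL hx w)
    _ ≤ clarkeDir f x u + clarkeDir f x w := by
        rw [clarkeDir_eq f x u, clarkeDir_eq f x w]
        exact add_le_add hcomp le_rfl

end CDAux


/-- Separation of the Clarke subdifferential extends to `∂_ε f(x)` for small `ε`. -/
theorem stmt2 {H : Type*} [NormedAddCommGroup H] [InnerProductSpace ℝ H] [CompleteSpace H]
    (f : H → ℝ) (x : H) (hlip : LocallyLipschitzNear f x)
    (v : H) (hv : v ≠ 0) (α : ℝ)
    (h : ∀ w ∈ clarkeSubdiff f x, ⟪w, v⟫ < α) :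
    ∃ εbar > 0, ∀ ε : ℝ, 0 ≤ ε → ε ≤ εbar →
      ∀ w ∈ goldsteinSubdiff f ε x, ⟪w, v⟫ < α := by
  obtain ⟨r, hr, L, hL⟩ := hlip
  have hx : x ∈ Metric.ball x r := Metric.mem_ball_self hr
  set N : H → ℝ := clarkeDir f x with hN
  have N_hom : ∀ c : ℝ, 0 < c → ∀ u, N (c • u) = c * N u :=
    fun c hc u => CDAux.clarkeDir_smul hL hx hc u
  have N_add : ∀ u w, N (u + w) ≤ N u + N w := fun u w => CDAux.clarkeDir_add hL hx u w
  have N0 : N 0 = 0 := CDAux.clarkeDir_zero x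
  have hNle : ∀ u, N u ≤ L * ‖u‖ := fun u => CDAux.clarkeDir_le_bound hL hx u
  have hNpair : ∀ u, 0 ≤ N u + N (-u) := fun u => by
    have h1 := N_add u (-u)
    rw [add_neg_cancel, N0] at h1
    linarith
  have hvH : ∀ c : ℝ, c • v = 0 → c • (N v) = 0 := fun c hc => by
    rcases smul_eq_zero.1 hc with h | h
    · simp [h]
    · exact absurd h hv
  set fp := LinearPMap.mkSpanSingleton' (σ := RingHom.id ℝ) v (N v) hvH with hfp
  have hfle : ∀ z : fp.domain, fp z ≤ N z.1 := by
    rintro ⟨z, hz⟩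
    have hz' : z ∈ Submodule.span ℝ {v} := by
      have hd := LinearPMap.domain_mkSpanSingleton (σ := RingHom.id ℝ) v (N v) hvH
      exact hd ▸ hz
    obtain ⟨c, hc⟩ := Submodule.mem_span_singleton.1 hz'
    have hzeq : (⟨z, hz⟩ : fp.domain) = ⟨c • v, hc ▸ hz⟩ := Subtype.ext hc.symm
    have happ : fp ⟨z, hz⟩ = c • N v := by
      rw [hzeq]
      exact LinearPMap.mkSpanSingleton'_apply (σ := RingHom.id ℝ) v (N v) hvH c _
    rw [happ]
    show c • N v ≤ N z
    rw [← hc]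
    rcases lt_trichotomy c 0 with hc0 | hc0 | hc0
    · have hcv : c • v = (-c) • (-v) := by rw [smul_neg, neg_smul, neg_neg]
      have h1 : N (c • v) = (-c) * N (-v) := by
        rw [hcv, N_hom (-c) (by linarith) (-v)]
      rw [h1, smul_eq_mul]
      have hp := hNpair v
      nlinarith
    · simp [hc0, N0]
    · rw [N_hom c hc0 v, smul_eq_mul]
  obtain ⟨g, hg1, hg2⟩ :=
    exists_extension_of_le_sublinear fp N (fun c hc u => N_hom c hc u) N_add hfle
  have hv_mem : v ∈ fp.domain := by
    rw [hfp, LinearPMap.domain_mkSpanSingleton]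
    exact Submodule.mem_span_singleton_self v
  have hgv : g v = N v := by
    have h1 := hg1 ⟨v, hv_mem⟩
    have h2 : fp ⟨v, hv_mem⟩ = N v := LinearPMap.mkSpanSingleton'_apply_self (σ := RingHom.id ℝ) v (N v) hvH _
    rw [h1, h2]
  have hgbound : ∀ u, ‖g u‖ ≤ (L:ℝ) * ‖u‖ := fun u => by
    rw [Real.norm_eq_abs, abs_le]
    constructor
    · have h1 : g (-u) ≤ N (-u) := hg2 (-u)
      have h2 : N (-u) ≤ L * ‖-u‖ := hNle (-u)
      rw [norm_neg] at h2
      have h3 : g (-u) = - g u := map_neg g u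
      linarith
    · exact (hg2 u).trans (hNle u)
  set G := g.mkContinuous ((L:ℝ)) hgbound with hG
  set w0 := (InnerProductSpace.toDual ℝ H).symm G with hw0def
  have hw0 : ∀ u, ⟪w0, u⟫ = g u := fun u => InnerProductSpace.toDual_symm_apply
  have hw0mem : w0 ∈ clarkeSubdiff f x := fun u => by
    rw [hw0 u]
    exact hg2 u
  have hcα : clarkeDir f x v < α := by
    have hα := h w0 hw0mem
    rw [hw0 v, hgv] at hα
    exact hα
  set c0 := clarkeDir f x v with hc0def
  set η := (α - c0)/2 with hη
  have hη0 : 0 < η := by rw [hη]; linarith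
  have hev : ∀ᶠ p in CDAux.FF x, CDAux.qd f v p < c0 + η := by
    apply Filter.eventually_lt_of_limsup_lt
    · rw [← CDAux.clarkeDir_eq]
      linarith
    · exact CDAux.qd_bddAbove hL hx v
  have hev' : ∀ᶠ p in ((𝓝 x) ×ˢ (𝓝[>] (0:ℝ))), CDAux.qd f v p < c0 + η := hev
  obtain ⟨pa, hpa, pb, hpb, himp⟩ := Filter.eventually_prod_iff.1 hev'
  obtain ⟨δ₁, hδ₁, hballpa⟩ := Metric.eventually_nhds_iff.1 hpa
  refine ⟨min (δ₁/2) (r/2), by positivity, ?_⟩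
  intro ε hε0 hεbar w hwg
  set S : Set H := {w' : H | ⟪w', v⟫ ≤ c0 + η} with hS
  have hSconv : Convex ℝ S :=
    convex_halfSpace_le ⟨fun a b => inner_add_left a b v, fun c a => real_inner_smul_left a v c⟩ _
  have hSclosed : IsClosed S := by
    have hcont : Continuous fun w' : H => ⟪w', v⟫ := continuous_id.inner continuous_const
    exact isClosed_le hcont continuous_const
  have hsub : goldsteinSubdiff f ε x ⊆ S := by
    unfold goldsteinSubdiff
    apply closure_minimal _ hSclosed
    apply convexHull_min _ hSconv
    apply Set.iUnion₂_subset
    intro y hy w' hw'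
    have hyx : dist y x ≤ ε := Metric.mem_closedBall.1 hy
    have hεr : ε ≤ r/2 := le_trans hεbar (min_le_right _ _)
    have hεδ : ε ≤ δ₁/2 := le_trans hεbar (min_le_left _ _)
    have hyball : y ∈ Metric.ball x r := by
      rw [Metric.mem_ball]
      linarith
    have hclark : clarkeDir f y v ≤ c0 + η := by
      rw [CDAux.clarkeDir_eq]
      refine Filter.limsup_le_of_le ((CDAux.qd_bddBelow hL hyball v).isCoboundedUnder_le) ?_
      have hyδ : y ∈ Metric.ball x δ₁ := by
        rw [Metric.mem_ball]
        linarith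
      have hopen : ∀ᶠ z in 𝓝 y, z ∈ Metric.ball x δ₁ :=
        Metric.isOpen_ball.eventually_mem hyδ
      have hpay : ∀ᶠ z in 𝓝 y, pa z := by
        filter_upwards [hopen] with z hz using hballpa (Metric.mem_ball.1 hz)
      have hprod := Filter.Eventually.prod_mk hpay hpb
      exact hprod.mono fun p hp => le_of_lt (himp hp.1 hp.2)
    exact le_trans (hw' v) hclark
  have hwS : ⟪w, v⟫ ≤ c0 + η := hsub hwg
  have hfin : c0 + η < α := by rw [hη]; linarith
  linarith
end

section
/- Let H be a real Hilbert space and f : H → ℝ locally Lipschitz near x ∈ H. Let (x_i) be a sequence in H converging to x in norm, (ε_i) a sequence of positive reals tending to 0, and (w_i) a sequence in H with w_i ∈ ∂_{ε_i} f(x_i) for all i. If w ∈ H is a weak sequential accumulation point of (w_i) (i.e., some subsequence of (w_i) converges to w in the weak topology), then w ∈ ∂f(x). -/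
open Filter Topology RealInnerProductSpace

private lemma quot_bound {H : Type*} [NormedAddCommGroup H] [InnerProductSpace ℝ H]
    {f : H → ℝ} {L : NNReal} {s : Set H} (hL : LipschitzOnWith L f s)
    {z : H} {t : ℝ} (v : H) (ht : 0 < t) (hz : z ∈ s) (hz' : z + t • v ∈ s) :
    |(f (z + t • v) - f z) / t| ≤ L * ‖v‖ := by
  rw [abs_div, abs_of_pos ht, div_le_iff₀ ht]
  have h := hL.dist_le_mul _ hz' _ hz
  rw [Real.dist_eq, dist_eq_norm] at h
  have : z + t • v - z = t • v := by abel
  rw [this, norm_smul, Real.norm_eq_abs, abs_of_pos ht] at h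
  calc |f (z + t • v) - f z| ≤ L * (t * ‖v‖) := h
    _ = L * ‖v‖ * t := by ring


/-- Demi-closedness: weak sequential accumulation points of `w_i ∈ ∂_{ε_i} f(x_i)` with
`x_i → x`, `ε_i ↓ 0` belong to `∂f(x)`. -/
theorem stmt3 {H : Type*} [NormedAddCommGroup H] [InnerProductSpace ℝ H] [CompleteSpace H]
    (f : H → ℝ) (x : H) (hlip : LocallyLipschitzNear f x)
    (xs : ℕ → H) (hx : Tendsto xs atTop (𝓝 x))
    (εs : ℕ → ℝ) (hεpos : ∀ i, 0 < εs i) (hε : Tendsto εs atTop (𝓝 (0 : ℝ)))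
    (ws : ℕ → H) (hw : ∀ i, ws i ∈ goldsteinSubdiff f (εs i) (xs i))
    (w : H) (φ : ℕ → ℕ) (hφ : StrictMono φ)
    (hweak : ∀ v : H, Tendsto (fun l => ⟪ws (φ l), v⟫) atTop (𝓝 ⟪w, v⟫)) :
    w ∈ clarkeSubdiff f x := by
  intro v
  by_contra hcon
  push_neg at hcon
  set c : ℝ := (clarkeDir f x v + ⟪w, v⟫) / 2 with hc
  have hc1 : clarkeDir f x v < c := by simp only [hc]; linarith
  have hc2 : c < ⟪w, v⟫ := by simp only [hc]; linarith
  obtain ⟨ε0, hε0, L, hL⟩ := hlip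
  set g : H × ℝ → ℝ := fun p => (f (p.1 + p.2 • v) - f p.1) / p.2 with hg
  set T : ℝ := ε0 / (2 * (‖v‖ + 1)) with hT
  have hvpos : (0:ℝ) < ‖v‖ + 1 := by positivity
  have hTpos : 0 < T := by positivity
  -- key pointwise bound: z ∈ ball x (ε0/2), 0 < t < T ⇒ |g (z,t)| ≤ L‖v‖
  have hkey : ∀ z ∈ Metric.ball x (ε0 / 2), ∀ t ∈ Set.Ioo (0:ℝ) T,
      |g (z, t)| ≤ L * ‖v‖ := by
    intro z hz t ht
    have hz1 : z ∈ Metric.ball x ε0 := by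
      rw [Metric.mem_ball] at hz ⊢; linarith
    have htv : t * ‖v‖ < ε0 / 2 := by
      have h1 : t * ‖v‖ ≤ t * (‖v‖ + 1) := by nlinarith [ht.1.le]
      have h2 : t * (‖v‖ + 1) < T * (‖v‖ + 1) := by nlinarith [ht.2]
      have h3 : T * (‖v‖ + 1) = ε0 / 2 := by rw [hT, div_mul_eq_mul_div, div_eq_div_iff (by positivity) (by norm_num)]; ring
      linarith
    have hz2 : z + t • v ∈ Metric.ball x ε0 := by
      rw [Metric.mem_ball] at hz ⊢
      calc dist (z + t • v) x ≤ dist (z + t • v) z + dist z x := dist_triangle _ _ _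
        _ < t * ‖v‖ + ε0 / 2 := by
            rw [dist_eq_norm]
            have : z + t • v - z = t • v := by abel
            rw [this, norm_smul, Real.norm_eq_abs, abs_of_pos ht.1]
            linarith [hz]
        _ < ε0 := by linarith
    exact quot_bound hL v ht.1 hz1 hz2
  -- boundedness along the product filter at x
  have hmemF : (Metric.ball x (ε0 / 2)) ×ˢ (Set.Ioo (0:ℝ) T) ∈ (𝓝 x) ×ˢ (𝓝[>] (0:ℝ)) :=
    prod_mem_prod (Metric.ball_mem_nhds x (by linarith)) (Ioo_mem_nhdsGT_of_mem ⟨le_refl _, hTpos⟩)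
  have hbd : ∀ᶠ p in (𝓝 x) ×ˢ (𝓝[>] (0:ℝ)), |g p| ≤ L * ‖v‖ := by
    filter_upwards [hmemF] with p hp
    exact hkey p.1 hp.1 p.2 hp.2
  have hbdd : IsBoundedUnder (· ≤ ·) ((𝓝 x) ×ˢ (𝓝[>] (0:ℝ))) g :=
    ⟨L * ‖v‖, eventually_map.2 (hbd.mono fun p hp => le_of_abs_le hp)⟩
  -- eventually g < c near x
  have hev : ∀ᶠ p in (𝓝 x) ×ˢ (𝓝[>] (0:ℝ)), g p < c :=
    eventually_lt_of_limsup_lt hc1 hbdd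
  -- extract a rectangle
  obtain ⟨s, hs, u, hu, hsu⟩ := mem_prod_iff.1 (hev.and (eventually_of_mem hmemF fun p hp => hp))
  obtain ⟨r, hr, hrs⟩ := Metric.mem_nhds_iff.1 hs
  obtain ⟨t0, ht0, ht0u⟩ := mem_nhdsGT_iff_exists_Ioo_subset.1 hu
  -- on ball x r × Ioo 0 (min t0 T): g ≤ c and g ≥ -(L‖v‖)
  have hrect : ∀ z ∈ Metric.ball x r, ∀ t ∈ Set.Ioo (0:ℝ) t0,
      g (z, t) < c ∧ |g (z, t)| ≤ L * ‖v‖ := by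
    intro z hz t ht
    have := hsu (Set.mk_mem_prod (hrs hz) (ht0u ht))
    exact ⟨this.1, hkey z this.2.1 t this.2.2⟩
  -- usc: for y in ball x (r/2), clarkeDir f y v ≤ c
  have husc : ∀ y ∈ Metric.ball x (r / 2), clarkeDir f y v ≤ c := by
    intro y hy
    have hmemFy : (Metric.ball y (r / 2)) ×ˢ (Set.Ioo (0:ℝ) t0) ∈ (𝓝 y) ×ˢ (𝓝[>] (0:ℝ)) :=
      prod_mem_prod (Metric.ball_mem_nhds y (by linarith)) (Ioo_mem_nhdsGT_of_mem ⟨le_refl _, ht0⟩)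
    have hsub : ∀ p ∈ (Metric.ball y (r / 2)) ×ˢ (Set.Ioo (0:ℝ) t0),
        g p < c ∧ |g p| ≤ L * ‖v‖ := by
      rintro ⟨z, t⟩ ⟨hz, ht⟩
      have hz' : z ∈ Metric.ball x r := by
        rw [Metric.mem_ball] at hz hy ⊢
        calc dist z x ≤ dist z y + dist y x := dist_triangle _ _ _
          _ < r / 2 + r / 2 := by linarith
          _ = r := by ring
      exact hrect z hz' t ht
    have hcob : IsCoboundedUnder (· ≤ ·) ((𝓝 y) ×ˢ (𝓝[>] (0:ℝ))) g := by
      apply IsBoundedUnder.isCoboundedUnder_le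
      exact ⟨-(L * ‖v‖), eventually_map.2
        (eventually_of_mem hmemFy fun p hp => neg_le_of_abs_le (hsub p hp).2)⟩
    exact limsup_le_of_le hcob (eventually_of_mem hmemFy fun p hp => (hsub p hp).1.le)
  -- half-space S
  set S : Set H := {w' : H | ⟪w', v⟫ ≤ c} with hS
  have hSconv : Convex ℝ S := convex_halfSpace_le ⟨fun a b => inner_add_left a b v,
    fun a b => real_inner_smul_left b v a⟩ c
  have hSclosed : IsClosed S :=
    isClosed_le (Continuous.inner continuous_id continuous_const) continuous_const
  -- goldstein subdiff ⊆ S eventually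
  have hgold : ∀ i, Metric.closedBall (xs i) (εs i) ⊆ Metric.ball x (r / 2) →
      ws i ∈ S := by
    intro i hball
    have h1 : (⋃ y ∈ Metric.closedBall (xs i) (εs i), clarkeSubdiff f y) ⊆ S := by
      intro w' hw'
      simp only [Set.mem_iUnion] at hw'
      obtain ⟨y, hy, hwy⟩ := hw'
      exact le_trans (hwy v) (husc y (hball hy))
    have h2 : convexHull ℝ (⋃ y ∈ Metric.closedBall (xs i) (εs i), clarkeSubdiff f y) ⊆ S :=
      convexHull_min h1 hSconv
    exact closure_minimal h2 hSclosed (hw i)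
  -- eventually the ball condition holds
  have hsum : Tendsto (fun i => dist (xs i) x + εs i) atTop (𝓝 0) := by
    have h1 : Tendsto (fun i => dist (xs i) x) atTop (𝓝 0) :=
      tendsto_iff_dist_tendsto_zero.1 hx
    simpa using h1.add hε
  have hevball : ∀ᶠ i in atTop, ws i ∈ S := by
    have : ∀ᶠ i in atTop, dist (xs i) x + εs i < r / 2 :=
      hsum.eventually (eventually_lt_nhds (by linarith : (0:ℝ) < r / 2))
    filter_upwards [this] with i hi
    apply hgold i
    intro y hy
    rw [Metric.mem_closedBall] at hy
    rw [Metric.mem_ball]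
    calc dist y x ≤ dist y (xs i) + dist (xs i) x := dist_triangle _ _ _
      _ ≤ εs i + dist (xs i) x := by linarith
      _ < r / 2 := by linarith
  -- pass to the subsequence and the weak limit
  have hφtend : Tendsto φ atTop atTop := hφ.tendsto_atTop
  have hevφ : ∀ᶠ l in atTop, ⟪ws (φ l), v⟫ ≤ c := hφtend.eventually hevball
  have : ⟪w, v⟫ ≤ c := le_of_tendsto (hweak v) hevφ
  linarith
end

section
/- Let H be a real Hilbert space and f : H → ℝ locally Lipschitz near x ∈ H. Then the Clarke subdifferential equals the intersection of all Goldstein ε-subdifferentials: ∂f(x) = ⋂_{ε > 0} ∂_ε f(x). -/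
open Filter Topology RealInnerProductSpace
open Metric

/-- `∂f(x) = ⋂_{ε > 0} ∂_ε f(x)` for `f` locally Lipschitz near `x`. -/
theorem stmt4 {H : Type*} [NormedAddCommGroup H] [InnerProductSpace ℝ H] [CompleteSpace H]
    (f : H → ℝ) (x : H) (hlip : LocallyLipschitzNear f x) :
    clarkeSubdiff f x = ⋂ (ε : ℝ) (_ : 0 < ε), goldsteinSubdiff f ε x := by
  obtain ⟨ε₀, hε₀, L, hL⟩ := hlip
  apply Set.Subset.antisymm
  · intro w hw
    refine Set.mem_iInter₂.2 fun ε hε => subset_closure (subset_convexHull ℝ _ ?_)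
    exact Set.mem_biUnion (Metric.mem_closedBall_self hε.le) hw
  · intro w hw v
    rw [Set.mem_iInter₂] at hw
    refine le_of_forall_pos_le_add fun δ hδ => ?_
    set g : H × ℝ → ℝ := fun p => (f (p.1 + p.2 • v) - f p.1) / p.2 with hg
    set t₀ : ℝ := ε₀ / (4 * (‖v‖ + 1)) with ht₀
    have hvpos : (0:ℝ) < ‖v‖ + 1 := by positivity
    have ht₀pos : 0 < t₀ := by positivity
    -- boundedness near x
    have bdd : ∀ y ∈ ball x (ε₀/2), ∀ᶠ p in (𝓝 y) ×ˢ (𝓝[>] (0:ℝ)), |g p| ≤ L * ‖v‖ := by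
      intro y hy
      have h1 : ∀ᶠ z in 𝓝 y, z ∈ ball x (3*ε₀/4) := by
        have : y ∈ ball x (3*ε₀/4) := by
          rw [mem_ball] at hy ⊢; linarith
        exact Metric.isOpen_ball.eventually_mem this
      have h2 : ∀ᶠ t in 𝓝[>] (0:ℝ), t ∈ Set.Ioc 0 t₀ :=
        Ioc_mem_nhdsGT_of_mem ⟨le_refl 0, ht₀pos⟩
      filter_upwards [h1.prod_mk h2] with p hp
      obtain ⟨hz, ht1, ht2⟩ := hp
      have htv : p.2 * ‖v‖ ≤ ε₀/4 := by
        calc p.2 * ‖v‖ ≤ t₀ * (‖v‖ + 1) := by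
              apply mul_le_mul ht2 (by linarith) (norm_nonneg v) ht₀pos.le
          _ = ε₀/4 := by rw [ht₀]; field_simp
      have hz2 : p.1 + p.2 • v ∈ ball x ε₀ := by
        rw [mem_ball] at hz ⊢
        calc dist (p.1 + p.2 • v) x ≤ dist p.1 x + ‖p.2 • v‖ := by
              rw [dist_eq_norm, dist_eq_norm]
              rw [show p.1 + p.2 • v - x = (p.1 - x) + p.2 • v by abel]
              exact norm_add_le _ _
          _ < 3*ε₀/4 + ε₀/4 := by
              apply add_lt_add_of_lt_of_le hz
              rw [norm_smul, Real.norm_eq_abs, abs_of_pos ht1]; exact htv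
          _ = ε₀ := by ring
      have hz1 : p.1 ∈ ball x ε₀ := by
        rw [mem_ball] at hz ⊢; linarith
      have hd := hL.dist_le_mul _ hz2 _ hz1
      rw [Real.dist_eq] at hd
      have : |f (p.1 + p.2 • v) - f p.1| ≤ L * (p.2 * ‖v‖) := by
        refine hd.trans ?_
        rw [dist_eq_norm]
        have : p.1 + p.2 • v - p.1 = p.2 • v := by abel
        rw [this, norm_smul, Real.norm_eq_abs, abs_of_pos ht1]
      rw [hg]
      simp only [abs_div, abs_of_pos ht1]
      rw [div_le_iff₀ ht1]
      calc |f (p.1 + p.2 • v) - f p.1| ≤ L * (p.2 * ‖v‖) := this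
        _ = L * ‖v‖ * p.2 := by ring
    have hxball : x ∈ ball x (ε₀/2) := mem_ball_self (by linarith)
    have bddx := bdd x hxball
    have hBx : ((𝓝 x) ×ˢ (𝓝[>] (0:ℝ))).IsBoundedUnder (· ≤ ·) g :=
      ⟨L * ‖v‖, Filter.eventually_map.2 (bddx.mono fun p hp => (abs_le.1 hp).2)⟩
    -- eventual bound near x
    have hlt : ∀ᶠ p in (𝓝 x) ×ˢ (𝓝[>] (0:ℝ)), g p < clarkeDir f x v + δ :=
      eventually_lt_of_limsup_lt (lt_add_of_pos_right _ hδ) hBx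
    rw [eventually_iff, Filter.mem_prod_iff] at hlt
    obtain ⟨U, hU, T, hT, hUT⟩ := hlt
    obtain ⟨r, hr, hrU⟩ := Metric.mem_nhds_iff.1 hU
    set ε : ℝ := min (r/2) (ε₀/4) with hε
    have hεpos : 0 < ε := lt_min (by linarith) (by linarith)
    -- key USC bound on the ball
    have usc : ∀ y ∈ closedBall x ε, clarkeDir f y v ≤ clarkeDir f x v + δ := by
      intro y hy
      rw [mem_closedBall] at hy
      have hy2 : y ∈ ball x (ε₀/2) := by
        rw [mem_ball]
        have : ε ≤ ε₀/4 := min_le_right _ _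
        linarith
      have hUy : U ∈ 𝓝 y := by
        apply Filter.mem_of_superset _ hrU
        apply Metric.isOpen_ball.mem_nhds
        rw [mem_ball]
        have : ε ≤ r/2 := min_le_left _ _
        linarith
      have hev : ∀ᶠ p in (𝓝 y) ×ˢ (𝓝[>] (0:ℝ)), g p ≤ clarkeDir f x v + δ := by
        filter_upwards [Filter.eventually_of_mem (Filter.prod_mem_prod hUy hT) (fun p hp => hp)]
          with p hp
        exact (hUT hp).le
      exact limsup_le_of_le (isCoboundedUnder_le_of_eventually_le _
        (by filter_upwards [bdd y hy2] with p hp using (abs_le.1 hp).1.trans_eq' rfl)) hev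
    -- halfspace containment
    have key : goldsteinSubdiff f ε x ⊆ {u : H | ⟪u, v⟫ ≤ clarkeDir f x v + δ} := by
      apply closure_minimal
      · apply convexHull_min
        · rintro u hu
          simp only [Set.mem_iUnion] at hu
          obtain ⟨y, hy, hu⟩ := hu
          exact (hu v).trans (usc y hy)
        · exact convex_halfSpace_le
            ⟨fun a b => inner_add_left a b v, fun c a => real_inner_smul_left a v c⟩ _
      · exact isClosed_le (Continuous.inner continuous_id continuous_const) continuous_const
    exact key (hw ε hεpos)
end

section
/- Let H be a real Hilbert space and let f_1,…,f_k : H → ℝ each be locally Lipschitz near x ∈ H. Let (ε_j) be a sequence of positive reals converging to 0, let (x_j) be a sequence in H converging to x in norm, and let (w_j) be a sequence in H converging weakly to w with w_j ∈ F_{ε_j}(x_j) for all j ≥ 1. Then w ∈ F_0(x) = convexHull(⋃_{i=1}^k ∂f_i(x)). -/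
open Filter Topology RealInnerProductSpace

namespace Stmt7Aux

variable {H : Type*} [NormedAddCommGroup H] [InnerProductSpace ℝ H]

/-- difference quotient -/
noncomputable def qt (f : H → ℝ) (v : H) (p : H × ℝ) : ℝ := (f (p.1 + p.2 • v) - f p.1) / p.2

theorem clarkeDir_eq (f : H → ℝ) (x v : H) :
    clarkeDir f x v = limsup (qt f v) ((𝓝 x) ×ˢ (𝓝[>] (0 : ℝ))) := rfl

theorem eventually_abs_qt_le {f : H → ℝ} {L : NNReal} {x : H} {δ : ℝ}
    (hL : LipschitzOnWith L f (Metric.ball x δ)) {y : H} (hy : y ∈ Metric.ball x δ) (v : H) :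
    ∀ᶠ p in (𝓝 y) ×ˢ (𝓝[>] (0 : ℝ)), |qt f v p| ≤ L * ‖v‖ := by
  set ρ : ℝ := δ - dist y x with hρdef
  have hρ : 0 < ρ := sub_pos.2 (Metric.mem_ball.1 hy)
  have hv1 : (0:ℝ) < ‖v‖ + 1 := by positivity
  have h1 : Metric.ball y (ρ/2) ∈ 𝓝 y := Metric.ball_mem_nhds _ (by positivity)
  have h2 : Set.Ioo (0:ℝ) (ρ/(2*(‖v‖+1))) ∈ 𝓝[>] (0:ℝ) :=
    Ioo_mem_nhdsGT_of_mem ⟨le_refl _, by positivity⟩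
  filter_upwards [Filter.prod_mem_prod h1 h2] with p hp
  obtain ⟨hp1, hp2⟩ := hp
  have ht : 0 < p.2 := hp2.1
  have hsmul : ‖p.2 • v‖ < ρ/2 := by
    rw [norm_smul, Real.norm_eq_abs, abs_of_pos ht]
    calc p.2 * ‖v‖ ≤ p.2 * (‖v‖ + 1) := by nlinarith [norm_nonneg v]
      _ < (ρ/(2*(‖v‖+1))) * (‖v‖+1) := by
          exact mul_lt_mul_of_pos_right hp2.2 hv1
      _ = ρ/2 := by field_simp
  have hd1 : dist p.1 y < ρ/2 := Metric.mem_ball.1 hp1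
  have hm1 : p.1 ∈ Metric.ball x δ := by
    have : dist p.1 x ≤ dist p.1 y + dist y x := dist_triangle _ _ _
    rw [Metric.mem_ball]
    have hρle : ρ ≤ δ - dist y x := le_of_eq rfl
    linarith
  have hm2 : p.1 + p.2 • v ∈ Metric.ball x δ := by
    have h' : dist (p.1 + p.2 • v) p.1 = ‖p.2 • v‖ := by
      simp [dist_eq_norm]
    have : dist (p.1 + p.2 • v) x ≤ dist (p.1 + p.2 • v) p.1 + dist p.1 x := dist_triangle _ _ _
    rw [Metric.mem_ball]
    rw [h'] at this
    have hd2 : dist p.1 x < ρ/2 + dist y x := by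
      have := dist_triangle p.1 y x; linarith
    linarith
  have hlip : dist (f (p.1 + p.2 • v)) (f p.1) ≤ L * dist (p.1 + p.2 • v) p.1 :=
    hL.dist_le_mul _ hm2 _ hm1
  rw [Real.dist_eq, dist_eq_norm, add_sub_cancel_left, norm_smul, Real.norm_eq_abs,
    abs_of_pos ht] at hlip
  rw [qt, abs_div, abs_of_pos ht, div_le_iff₀ ht]
  calc |f (p.1 + p.2 • v) - f p.1| ≤ L * (|p.2| * ‖v‖) := by
        rwa [abs_of_pos ht]
    _ = L * ‖v‖ * p.2 := by rw [abs_of_pos ht]; ring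


section bddlemmas
variable {f : H → ℝ} {L : NNReal} {x : H} {δ : ℝ}
  (hL : LipschitzOnWith L f (Metric.ball x δ)) {y : H} (hy : y ∈ Metric.ball x δ) (v : H)

include hL hy

theorem isBoundedUnder_qt :
    IsBoundedUnder (· ≤ ·) ((𝓝 y) ×ˢ (𝓝[>] (0 : ℝ))) (qt f v) :=
  ⟨L * ‖v‖, (eventually_abs_qt_le hL hy v).mono fun _ hp => (abs_le.1 hp).2⟩

theorem isBoundedUnder_ge_qt :
    IsBoundedUnder (· ≥ ·) ((𝓝 y) ×ˢ (𝓝[>] (0 : ℝ))) (qt f v) :=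
  ⟨-(L * ‖v‖), (eventually_abs_qt_le hL hy v).mono fun _ hp => (abs_le.1 hp).1⟩

theorem isCoboundedUnder_qt :
    IsCoboundedUnder (· ≤ ·) ((𝓝 y) ×ˢ (𝓝[>] (0 : ℝ))) (qt f v) :=
  (isBoundedUnder_ge_qt hL hy v).isCoboundedUnder_le

theorem clarkeDir_le_mul : clarkeDir f y v ≤ L * ‖v‖ := by
  rw [clarkeDir_eq]
  exact limsup_le_of_le (isCoboundedUnder_qt hL hy v)
    ((eventually_abs_qt_le hL hy v).mono fun _ hp => (abs_le.1 hp).2)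

end bddlemmas

theorem clarkeDir_zero' (f : H → ℝ) (x : H) : clarkeDir f x 0 = 0 := by
  have : (fun p : H × ℝ => (f (p.1 + p.2 • (0:H)) - f p.1) / p.2) = fun _ => (0:ℝ) := by
    funext p; simp
  rw [clarkeDir, this, limsup_const]

/-- membership in the Clarke subdifferential gives a norm bound -/
theorem norm_le_of_mem_clarkeSubdiff {f : H → ℝ} {L : NNReal} {x : H} {δ : ℝ}
    (hL : LipschitzOnWith L f (Metric.ball x δ)) (hδ : 0 < δ) {a : H}
    (ha : ∀ v : H, ⟪a, v⟫ ≤ clarkeDir f x v) : ‖a‖ ≤ L := by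
  have h := (ha a).trans (clarkeDir_le_mul hL (Metric.mem_ball_self hδ) a)
  rw [real_inner_self_eq_norm_sq] at h
  rcases eq_or_lt_of_le (norm_nonneg a) with h0 | h0
  · rw [← h0]; positivity
  · nlinarith

theorem tendsto_phi (x : H) (v : H) :
    Tendsto (fun p : H × ℝ => (p.1 + p.2 • v, p.2)) ((𝓝 x) ×ˢ (𝓝[>] (0:ℝ)))
      ((𝓝 x) ×ˢ (𝓝[>] (0:ℝ))) := by
  refine Tendsto.prodMk ?_ tendsto_snd
  have h1 : Tendsto (fun p : H × ℝ => p.1) ((𝓝 x) ×ˢ (𝓝[>] (0:ℝ))) (𝓝 x) := tendsto_fst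
  have h2 : Tendsto (fun p : H × ℝ => p.2) ((𝓝 x) ×ˢ (𝓝[>] (0:ℝ))) (𝓝 (0:ℝ)) :=
    tendsto_snd.mono_right nhdsWithin_le_nhds
  have := h1.add (h2.smul_const v)
  simpa using this

theorem tendsto_psi (x : H) {c : ℝ} (hc : 0 < c) :
    Tendsto (fun p : H × ℝ => (p.1, c * p.2)) ((𝓝 x) ×ˢ (𝓝[>] (0:ℝ)))
      ((𝓝 x) ×ˢ (𝓝[>] (0:ℝ))) := by
  refine Tendsto.prodMk tendsto_fst ?_
  rw [tendsto_nhdsWithin_iff]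
  constructor
  · have h2 : Tendsto (fun p : H × ℝ => p.2) ((𝓝 x) ×ˢ (𝓝[>] (0:ℝ))) (𝓝 (0:ℝ)) :=
      tendsto_snd.mono_right nhdsWithin_le_nhds
    simpa using h2.const_mul c
  · have hev : ∀ᶠ p : H × ℝ in (𝓝 x) ×ˢ (𝓝[>] (0:ℝ)), p.2 ∈ Set.Ioi (0:ℝ) := by
      filter_upwards [Filter.prod_mem_prod (Filter.univ_mem) (self_mem_nhdsWithin)] with p hp
      exact hp.2
    exact hev.mono fun p hp => Set.mem_Ioi.2 (mul_pos hc hp)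

section sublinear
variable {f : H → ℝ} {L : NNReal} {x : H} {δ : ℝ}
  (hL : LipschitzOnWith L f (Metric.ball x δ)) (hδ : 0 < δ)
include hL hδ

/-- helper: limsup of a pullback along a self-map of the filter is at most limsup. -/
theorem limsup_comp_le (v : H) {ψ : H × ℝ → H × ℝ}
    (hψ : Tendsto ψ ((𝓝 x) ×ˢ (𝓝[>] (0:ℝ))) ((𝓝 x) ×ˢ (𝓝[>] (0:ℝ)))) :
    limsup (qt f v ∘ ψ) ((𝓝 x) ×ˢ (𝓝[>] (0:ℝ))) ≤ clarkeDir f x v := by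
  have hx : x ∈ Metric.ball x δ := Metric.mem_ball_self hδ
  rw [clarkeDir_eq]
  have h1 : limsup (qt f v ∘ ψ) ((𝓝 x) ×ˢ (𝓝[>] (0:ℝ)))
      = limsup (qt f v) (Filter.map ψ ((𝓝 x) ×ˢ (𝓝[>] (0:ℝ)))) := by
    rw [limsup, limsup, ← Filter.map_map]
  rw [h1]
  refine limsSup_le_limsSup_of_le (Filter.map_mono hψ) ?_ ?_
  · -- cobounded
    haveI : (Filter.map ψ ((𝓝 x) ×ˢ (𝓝[>] (0:ℝ)))).NeBot := Filter.map_neBot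
    have hb : IsBoundedUnder (· ≥ ·) (Filter.map ψ ((𝓝 x) ×ˢ (𝓝[>] (0:ℝ)))) (qt f v) := by
      refine ⟨-(L * ‖v‖), ?_⟩
      rw [Filter.eventually_map]
      exact (hψ.eventually (eventually_abs_qt_le hL hx v)).mono fun _ hp => (abs_le.1 hp).1
    exact hb.isCoboundedUnder_le
  · exact isBoundedUnder_qt hL hx v

theorem clarkeDir_add_le (u v : H) :
    clarkeDir f x (u + v) ≤ clarkeDir f x u + clarkeDir f x v := by
  have hx : x ∈ Metric.ball x δ := Metric.mem_ball_self hδ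
  set F := (𝓝 x) ×ˢ (𝓝[>] (0:ℝ)) with hF
  set φ : H × ℝ → H × ℝ := fun p => (p.1 + p.2 • v, p.2) with hφdef
  have hφ : Tendsto φ F F := tendsto_phi x v
  have hfun : qt f (u + v) = fun p => (qt f u ∘ φ) p + qt f v p := by
    funext p
    simp only [qt, Function.comp, hφdef]
    have harg : p.1 + p.2 • (u + v) = p.1 + p.2 • v + p.2 • u := by
      rw [smul_add]; abel
    rw [harg, ← add_div, sub_add_sub_cancel]
  have hbd1 : IsBoundedUnder (· ≥ ·) F (qt f u ∘ φ) :=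
    ⟨-(L * ‖u‖), (hφ.eventually (eventually_abs_qt_le hL hx u)).mono fun _ hp => (abs_le.1 hp).1⟩
  have hbd2 : IsBoundedUnder (· ≤ ·) F (qt f u ∘ φ) :=
    ⟨L * ‖u‖, (hφ.eventually (eventually_abs_qt_le hL hx u)).mono fun _ hp => (abs_le.1 hp).2⟩
  calc clarkeDir f x (u + v) = limsup (fun p => (qt f u ∘ φ) p + qt f v p) F := by
        rw [clarkeDir_eq, hfun]
    _ ≤ limsup (qt f u ∘ φ) F + limsup (qt f v) F :=
        limsup_add_le hbd1 hbd2 (isCoboundedUnder_qt hL hx v) (isBoundedUnder_qt hL hx v)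
    _ ≤ clarkeDir f x u + clarkeDir f x v := by
        have := limsup_comp_le hL hδ u (tendsto_phi x v)
        rw [clarkeDir_eq f x v]
        exact add_le_add this le_rfl

theorem clarkeDir_smul_le {c : ℝ} (hc : 0 < c) (v : H) :
    clarkeDir f x (c • v) ≤ c * clarkeDir f x v := by
  have hx : x ∈ Metric.ball x δ := Metric.mem_ball_self hδ
  set F := (𝓝 x) ×ˢ (𝓝[>] (0:ℝ)) with hF
  set ψ : H × ℝ → H × ℝ := fun p => (p.1, c * p.2) with hψdef
  have hψ : Tendsto ψ F F := tendsto_psi x hc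
  have hfun : qt f (c • v) = fun p => c * (qt f v ∘ ψ) p := by
    funext p
    simp only [qt, Function.comp, hψdef]
    rw [show p.2 • (c • v) = (c * p.2) • v by rw [smul_smul, mul_comm]]
    rw [mul_div_assoc', mul_comm c p.2, ← div_div, mul_div_assoc, mul_comm c,
      mul_div_assoc, div_self hc.ne', mul_one]
  have hbd1 : IsBoundedUnder (· ≥ ·) F (qt f v ∘ ψ) :=
    ⟨-(L * ‖v‖), (hψ.eventually (eventually_abs_qt_le hL hx v)).mono fun _ hp => (abs_le.1 hp).1⟩
  have hbd2 : IsBoundedUnder (· ≤ ·) F (qt f v ∘ ψ) :=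
    ⟨L * ‖v‖, (hψ.eventually (eventually_abs_qt_le hL hx v)).mono fun _ hp => (abs_le.1 hp).2⟩
  have hco : IsCoboundedUnder (· ≤ ·) F (qt f v ∘ ψ) := hbd1.isCoboundedUnder_le
  have hg : clarkeDir f x (c • v) = c * limsup (qt f v ∘ ψ) F := by
    rw [clarkeDir_eq, hfun]
    have := (OrderIso.mulLeft₀ c hc).limsup_apply (f := F) (u := qt f v ∘ ψ)
      hbd2 hco (by
        refine ⟨c * (L * ‖v‖), ?_⟩
        exact (hψ.eventually (eventually_abs_qt_le hL hx v)).mono fun _ hp => by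
          simpa using mul_le_mul_of_nonneg_left (abs_le.1 hp).2 hc.le)
      (by
        refine (IsBoundedUnder.isCoboundedUnder_le ⟨c * (-(L * ‖v‖)), ?_⟩)
        exact (hψ.eventually (eventually_abs_qt_le hL hx v)).mono fun _ hp => by
          simpa using mul_le_mul_of_nonneg_left (abs_le.1 hp).1 hc.le)
    simpa using this.symm
  rw [hg]
  exact mul_le_mul_of_nonneg_left (limsup_comp_le hL hδ v hψ) hc.le

theorem clarkeDir_smul {c : ℝ} (hc : 0 < c) (v : H) :
    clarkeDir f x (c • v) = c * clarkeDir f x v := by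
  refine le_antisymm (clarkeDir_smul_le hL hδ hc v) ?_
  have h2 := clarkeDir_smul_le hL hδ (c := c⁻¹) (inv_pos.2 hc) (c • v)
  rw [inv_smul_smul₀ hc.ne'] at h2
  calc c * clarkeDir f x v ≤ c * (c⁻¹ * clarkeDir f x (c • v)) :=
        mul_le_mul_of_nonneg_left h2 hc.le
    _ = clarkeDir f x (c • v) := by field_simp

end sublinear
section support
variable [CompleteSpace H] {f : H → ℝ} {L : NNReal} {x : H} {δ : ℝ}
  (hL : LipschitzOnWith L f (Metric.ball x δ)) (hδ : 0 < δ)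
include hL hδ

theorem exists_mem_clarkeSubdiff_inner_eq (v : H) :
    ∃ a ∈ clarkeSubdiff f x, ⟪a, v⟫ = clarkeDir f x v := by
  set N : H → ℝ := clarkeDir f x with hN
  have hx : x ∈ Metric.ball x δ := Metric.mem_ball_self hδ
  have N_hom : ∀ c : ℝ, 0 < c → ∀ u : H, N (c • u) = c * N u := fun c hc u =>
    clarkeDir_smul hL hδ hc u
  have N_add : ∀ u w : H, N (u + w) ≤ N u + N w := clarkeDir_add_le hL hδ
  have N_zero : N 0 = 0 := clarkeDir_zero' f x
  have N_le : ∀ u : H, N u ≤ L * ‖u‖ := fun u => clarkeDir_le_mul hL hx u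
  -- get a linear functional g ≤ N with g v = N v
  have key : ∃ g : H →ₗ[ℝ] ℝ, (∀ u, g u ≤ N u) ∧ g v = N v := by
    rcases eq_or_ne v 0 with rfl | hv
    · obtain ⟨g, -, hg2⟩ := exists_extension_of_le_sublinear ((0 : H →ₗ[ℝ] ℝ).toPMap ⊥) N
        N_hom N_add (fun u => by
          have hu0 : (u : H) ∈ (⊥ : Submodule ℝ H) := u.2
          have : (u : H) = 0 := Submodule.mem_bot ℝ |>.1 hu0
          change (0 : H →ₗ[ℝ] ℝ) (u : H) ≤ N (u : H); simp [this, N_zero])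
      exact ⟨g, hg2, by simp [N_zero]⟩
    · have Hspan : ∀ c : ℝ, c • v = 0 → c • N v = 0 := by
        intro c hc
        rcases smul_eq_zero.1 hc with rfl | h
        · simp
        · exact absurd h hv
      obtain ⟨g, hg1, hg2⟩ := exists_extension_of_le_sublinear
        (LinearPMap.mkSpanSingleton' (σ := RingHom.id ℝ) v (N v) Hspan) N N_hom N_add (fun u => by
          have hu2 : (u : H) ∈ Submodule.span ℝ {v} := u.2
          obtain ⟨c, hc⟩ := Submodule.mem_span_singleton.1 hu2
          have hmem : c • v ∈ (LinearPMap.mkSpanSingleton' (σ := RingHom.id ℝ) v (N v) Hspan).domain :=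
            Submodule.mem_span_singleton.2 ⟨c, rfl⟩
          have hu : u = ⟨c • v, hmem⟩ := Subtype.ext hc.symm
          rw [hu, LinearPMap.mkSpanSingleton'_apply]
          show c • N v ≤ N (c • v)
          rcases lt_trichotomy c 0 with h | rfl | h
          · have h1 : N (c • v) + N ((-c) • v) ≥ 0 := by
              have := N_add (c • v) ((-c) • v)
              have h2 : c • v + (-c) • v = 0 := by rw [neg_smul]; abel
              rw [h2, N_zero] at this; linarith
            have h3 : N ((-c) • v) = (-c) * N v := N_hom (-c) (by linarith) v
            simp only [smul_eq_mul]
            nlinarith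
          · simp [N_zero]
          · rw [N_hom c h v]; simp)
      refine ⟨g, hg2, ?_⟩
      have hv1 : v ∈ (LinearPMap.mkSpanSingleton' (σ := RingHom.id ℝ) v (N v) Hspan).domain :=
        Submodule.mem_span_singleton_self v
      have := hg1 ⟨v, hv1⟩
      rw [this]
      exact LinearPMap.mkSpanSingleton'_apply_self v (N v) Hspan _
  obtain ⟨g, hg, hgv⟩ := key
  have hgbound : ∀ u : H, ‖g u‖ ≤ L * ‖u‖ := by
    intro u
    rw [Real.norm_eq_abs, abs_le]
    constructor
    · have := (hg (-u)).trans (N_le (-u))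
      rw [map_neg, norm_neg] at this
      linarith
    · exact (hg u).trans (N_le u)
  set G : H →L[ℝ] ℝ := LinearMap.mkContinuous g L hgbound with hG
  set a : H := (InnerProductSpace.toDual ℝ H).symm G with ha
  have hav : ∀ u : H, ⟪a, u⟫ = g u := fun u => by
    rw [ha, InnerProductSpace.toDual_symm_apply]; rfl
  exact ⟨a, fun u => (hav u).le.trans (hg u), by rw [hav v, hgv]⟩

theorem clarkeSubdiff_nonempty : (clarkeSubdiff f x).Nonempty := by
  obtain ⟨a, ha, -⟩ := exists_mem_clarkeSubdiff_inner_eq hL hδ 0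
  exact ⟨a, ha⟩

end support

theorem convex_clarkeSubdiff (f : H → ℝ) (x : H) : Convex ℝ (clarkeSubdiff f x) := by
  intro a ha b hb s t hs ht hst
  intro v
  have := add_le_add (mul_le_mul_of_nonneg_left (ha v) hs) (mul_le_mul_of_nonneg_left (hb v) ht)
  rw [inner_add_left, inner_smul_left, inner_smul_left]
  calc s * ⟪a,v⟫ + t * ⟪b,v⟫ ≤ s * clarkeDir f x v + t * clarkeDir f x v := this
    _ = clarkeDir f x v := by rw [← add_mul, hst, one_mul]

/-- Upper semicontinuity of the Clarke directional derivative. -/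
theorem usc_clarkeDir {f : H → ℝ} {L : NNReal} {x : H} {δ : ℝ}
    (hL : LipschitzOnWith L f (Metric.ball x δ)) (hδ : 0 < δ) (v : H) {c : ℝ}
    (hc : clarkeDir f x v < c) :
    ∃ r > 0, r < δ ∧ ∀ y ∈ Metric.ball x r, clarkeDir f y v ≤ c := by
  have hx : x ∈ Metric.ball x δ := Metric.mem_ball_self hδ
  have hev : ∀ᶠ p in (𝓝 x) ×ˢ (𝓝[>] (0:ℝ)), qt f v p < c := by
    rw [clarkeDir_eq] at hc
    exact eventually_lt_of_limsup_lt hc (isBoundedUnder_qt hL hx v)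
  rw [Filter.eventually_iff, Filter.mem_prod_iff] at hev
  obtain ⟨U, hU, V, hV, hUV⟩ := hev
  obtain ⟨ρ, hρ, hρU⟩ := Metric.mem_nhds_iff.1 hU
  refine ⟨min (ρ/2) (δ/2), by positivity, lt_of_le_of_lt (min_le_right _ _) (by linarith), ?_⟩
  intro y hy
  have hyδ : y ∈ Metric.ball x δ := by
    rw [Metric.mem_ball] at hy ⊢
    have := lt_of_lt_of_le hy (min_le_right _ _)
    linarith
  rw [clarkeDir_eq]
  refine limsup_le_of_le (isCoboundedUnder_qt hL hyδ v) ?_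
  have hball : Metric.ball y (ρ/2) ∈ 𝓝 y := Metric.ball_mem_nhds _ (by positivity)
  filter_upwards [Filter.prod_mem_prod hball hV] with p hp
  have hpU : p.1 ∈ U := by
    apply hρU
    rw [Metric.mem_ball] at *
    have h1 : dist p.1 y < ρ/2 := hp.1
    have h2 : dist y x < ρ/2 := lt_of_lt_of_le hy (min_le_left _ _)
    have := dist_triangle p.1 y x
    linarith
  exact le_of_lt (hUV (Set.mk_mem_prod hpU hp.2))

/-- Halfspace bound for the multiobjective subdifferential. -/
theorem multiSubdiff_subset_halfspace {k : ℕ} (f : Fin k → H → ℝ) (ε : ℝ) (x' : H)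
    (v : H) (c : ℝ) (h : ∀ i, ∀ y ∈ Metric.closedBall x' ε, clarkeDir (f i) y v ≤ c) :
    multiSubdiff f ε x' ⊆ {u : H | ⟪u, v⟫ ≤ c} := by
  set S : Set H := {u : H | ⟪u, v⟫ ≤ c} with hS
  have hcont : Continuous fun u : H => ⟪u, v⟫ := continuous_id.inner continuous_const
  have hclosed : IsClosed S := by
    have : S = (fun u : H => ⟪u, v⟫) ⁻¹' Set.Iic c := rfl
    rw [this]
    exact IsClosed.preimage hcont isClosed_Iic
  have hconvex : Convex ℝ S := by
    intro a ha b hb s t hs ht hst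
    simp only [hS, Set.mem_setOf_eq, inner_add_left, inner_smul_left,
      RCLike.ofReal_real_eq_id, id, starRingEnd_apply, star_trivial] at *
    have hc' : s * c + t * c = c := by rw [← add_mul, hst, one_mul]
    nlinarith [mul_le_mul_of_nonneg_left ha hs, mul_le_mul_of_nonneg_left hb ht]
  refine closure_minimal (convexHull_min (Set.iUnion_subset fun i => ?_) hconvex) hclosed
  refine closure_minimal (convexHull_min (Set.iUnion₂_subset fun y hy => ?_) hconvex) hclosed
  intro a ha
  exact (ha v).trans (h i y hy)

theorem convexHull_iUnion_eq_image {k : ℕ} (K : Fin k → Set H)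
    (hconv : ∀ i, Convex ℝ (K i)) (hne : ∀ i, (K i).Nonempty) :
    convexHull ℝ (⋃ i, K i) =
      (fun q : (Fin k → ℝ) × (Fin k → H) => ∑ i, q.1 i • q.2 i) ''
        ((stdSimplex ℝ (Fin k)) ×ˢ Set.univ.pi fun i => K i) := by
  apply Set.Subset.antisymm
  · refine convexHull_min ?_ ?_
    · -- each K i is in the image
      rintro a ⟨s, ⟨i, rfl⟩, has⟩
      classical
      refine ⟨(fun j => if j = i then (1:ℝ) else 0, fun j => if h : j = i then a else (hne j).some),
        ⟨⟨fun j => by dsimp; split <;> norm_num, by simp⟩, fun j _ => by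
          dsimp; split
          · rename_i h; subst h; exact has
          · exact (hne j).some_mem⟩, ?_⟩
      dsimp only
      rw [Finset.sum_eq_single i]
      · simp
      · intro j _ hj; simp [hj]
      · simp
    · -- the image is convex
      rintro p ⟨⟨t, a⟩, ⟨ht, ha⟩, rfl⟩ q ⟨⟨s, b⟩, ⟨hs, hb⟩, rfl⟩ θ μ hθ hμ hθμ
      classical
      set r : Fin k → ℝ := fun i => θ * t i + μ * s i with hr
      have hrnn : ∀ i, 0 ≤ r i := fun i =>
        add_nonneg (mul_nonneg hθ (ht.1 i)) (mul_nonneg hμ (hs.1 i))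
      have hrsum : ∑ i, r i = 1 := by
        simp only [hr, Finset.sum_add_distrib, ← Finset.mul_sum, ht.2, hs.2]
        simpa using hθμ
      set c : Fin k → H := fun i =>
        if h : r i = 0 then (hne i).some
        else ((θ * t i) / r i) • a i + ((μ * s i) / r i) • b i with hc
      refine ⟨(r, c), ⟨⟨hrnn, hrsum⟩, fun i _ => ?_⟩, ?_⟩
      · by_cases hri : r i = 0
        · simp only [hc, dif_pos hri]; exact (hne i).some_mem
        · simp only [hc, dif_neg hri]
          have hripos : 0 < r i := lt_of_le_of_ne (hrnn i) (Ne.symm hri)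
          refine (hconv i) (ha i trivial) (hb i trivial) ?_ ?_ ?_
          · exact div_nonneg (mul_nonneg hθ (ht.1 i)) (hrnn i)
          · exact div_nonneg (mul_nonneg hμ (hs.1 i)) (hrnn i)
          · field_simp; rfl
      · dsimp only
        rw [Finset.smul_sum, Finset.smul_sum, ← Finset.sum_add_distrib]
        refine Finset.sum_congr rfl fun i _ => ?_
        by_cases hri : r i = 0
        · have h1 : θ * t i = 0 ∧ μ * s i = 0 := by
            have := mul_nonneg hθ (ht.1 i)
            have := mul_nonneg hμ (hs.1 i)
            have : θ * t i + μ * s i = 0 := hri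
            constructor <;> linarith
          rw [smul_smul, smul_smul, h1.1, h1.2, hri, zero_smul, zero_smul, zero_smul, add_zero]
        · simp only [hc, dif_neg hri]
          rw [smul_add, smul_smul, smul_smul, smul_smul, smul_smul]
          congr 1
          · congr 1; field_simp
          · congr 1; field_simp
  · -- image ⊆ convexHull
    rintro p ⟨⟨t, a⟩, ⟨ht, ha⟩, rfl⟩
    exact (convex_convexHull ℝ _).sum_mem (fun i _ => ht.1 i) ht.2
      (fun i _ => subset_convexHull ℝ _ (Set.mem_iUnion.2 ⟨i, ha i trivial⟩))

theorem lipschitzOnWith_weaken {α β : Type*} [PseudoEMetricSpace α] [PseudoEMetricSpace β]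
    {K K' : NNReal} {g : α → β} {s : Set α} (h : LipschitzOnWith K g s) (hK : K ≤ K') :
    LipschitzOnWith K' g s := fun _ ha _ hb =>
  (h ha hb).trans (mul_le_mul_left (ENNReal.coe_le_coe.2 hK) _)

section weak
variable [CompleteSpace H]
/-- the canonical map from the weak space to the weak-star dual, via the Riesz isometry -/
noncomputable def eW : WeakSpace ℝ H → WeakDual ℝ H :=
  fun z => InnerProductSpace.toDual ℝ H ((toWeakSpace ℝ H).symm z)

theorem continuous_eW : Continuous (eW (H := H)) := by
  apply WeakBilin.continuous_of_continuous_eval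
  intro z
  have h : (fun a : WeakSpace ℝ H => (topDualPairing ℝ H) (eW a) z)
      = fun a : WeakSpace ℝ H =>
        ((topDualPairing ℝ H).flip a) (InnerProductSpace.toDual ℝ H z) := by
    funext a
    show (InnerProductSpace.toDual ℝ H ((toWeakSpace ℝ H).symm a)) z
      = (InnerProductSpace.toDual ℝ H z) ((toWeakSpace ℝ H).symm a)
    rw [InnerProductSpace.toDual_apply_apply, InnerProductSpace.toDual_apply_apply, real_inner_comm]
  rw [h]
  exact WeakBilin.eval_continuous ((topDualPairing ℝ H).flip) _

theorem injective_eW : Function.Injective (eW (H := H)) :=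
  (InnerProductSpace.toDual ℝ H).injective.comp (toWeakSpace ℝ H).symm.injective

theorem isInducing_eW : Topology.IsInducing (eW (H := H)) := by
  constructor
  refine le_antisymm (continuous_iff_le_induced.mp continuous_eW) ?_
  letI tI : TopologicalSpace (WeakSpace ℝ H) :=
    TopologicalSpace.induced (eW (H := H)) inferInstance
  have heWc : @Continuous _ _ tI _ (eW (H := H)) := continuous_induced_dom
  have hcont : @Continuous _ _ tI (instTopologicalSpaceWeakSpace ℝ H : TopologicalSpace (WeakSpace ℝ H)) id := by
    apply WeakBilin.continuous_of_continuous_eval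
    intro φ
    have h : (fun a : WeakSpace ℝ H => ((topDualPairing ℝ H).flip (id a)) φ)
        = (fun ψ : WeakDual ℝ H =>
            (topDualPairing ℝ H) ψ ((InnerProductSpace.toDual ℝ H).symm φ)) ∘ (eW (H := H)) := by
      funext a
      show φ ((toWeakSpace ℝ H).symm a)
        = (InnerProductSpace.toDual ℝ H ((toWeakSpace ℝ H).symm a))
            ((InnerProductSpace.toDual ℝ H).symm φ)
      rw [InnerProductSpace.toDual_apply_apply, real_inner_comm,
        InnerProductSpace.toDual_symm_apply]
    refine (congrArg (@Continuous _ _ tI _) h).mpr ?_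
    exact (WeakBilin.eval_continuous (topDualPairing ℝ H) _).comp heWc
  exact continuous_id_iff_le.mp hcont

theorem isCompact_weak_closedBall (L : ℝ) :
    IsCompact (toWeakSpace ℝ H '' Metric.closedBall (0 : H) L) := by
  rw [isInducing_eW.isCompact_iff]
  have himg : eW (H := H) '' (toWeakSpace ℝ H '' Metric.closedBall (0 : H) L)
      = WeakDual.toStrongDual ⁻¹' Metric.closedBall 0 L := by
    ext φ
    simp only [Set.mem_image, Set.mem_preimage, Metric.mem_closedBall, dist_zero_right,
      exists_exists_and_eq_and]
    constructor
    · rintro ⟨a, ha, rfl⟩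
      show ‖WeakDual.toStrongDual (eW (toWeakSpace ℝ H a))‖ ≤ L
      have h2 : WeakDual.toStrongDual (eW (toWeakSpace ℝ H a))
          = InnerProductSpace.toDual ℝ H a := by
        show (InnerProductSpace.toDual ℝ H) ((toWeakSpace ℝ H).symm (toWeakSpace ℝ H a)) = _
        rw [LinearEquiv.symm_apply_apply]
      rw [h2, LinearIsometryEquiv.norm_map]
      exact ha
    · intro hφ
      refine ⟨(InnerProductSpace.toDual ℝ H).symm (WeakDual.toStrongDual φ), ?_, ?_⟩
      · rw [LinearIsometryEquiv.norm_map]; exact hφ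
      · show (InnerProductSpace.toDual ℝ H) ((toWeakSpace ℝ H).symm (toWeakSpace ℝ H _)) = φ
        rw [LinearEquiv.symm_apply_apply, LinearIsometryEquiv.apply_symm_apply]; rfl
  rw [himg]
  exact WeakDual.isCompact_closedBall (𝕜 := ℝ) (E := H) 0 L

/-- re-type a set of `H` as a set of the weak space -/
def asWeak (s : Set H) : Set (WeakSpace ℝ H) := s

noncomputable instance : ContinuousSMul ℝ (WeakSpace ℝ H) :=
  WeakBilin.instContinuousSMul ((topDualPairing ℝ H).flip)

theorem toWeakSpace_image (s : Set H) : toWeakSpace ℝ H '' s = s := by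
  show (fun a : H => a) '' s = s
  exact Set.image_id s

theorem isClosed_weak_clarkeSubdiff (f : H → ℝ) (x : H) :
    IsClosed (asWeak (clarkeSubdiff f x)) := by
  have hset : asWeak (clarkeSubdiff f x) = ⋂ v : H,
      (fun w : WeakSpace ℝ H => ((topDualPairing ℝ H).flip w) (InnerProductSpace.toDual ℝ H v))
        ⁻¹' Set.Iic (clarkeDir f x v) := by
    ext w
    show (∀ v : H, inner (𝕜 := ℝ) (show H from w) v ≤ clarkeDir f x v) ↔ _
    simp only [Set.mem_iInter, Set.mem_preimage, Set.mem_Iic]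
    constructor
    · intro h v
      show (InnerProductSpace.toDual ℝ H v) (show H from w) ≤ _
      rw [InnerProductSpace.toDual_apply_apply, real_inner_comm]
      exact h v
    · intro h v
      have := h v
      rw [show ((topDualPairing ℝ H).flip w) (InnerProductSpace.toDual ℝ H v)
        = ⟪v, (show H from w)⟫ from InnerProductSpace.toDual_apply_apply, real_inner_comm] at this
      exact this
  rw [hset]
  exact isClosed_iInter fun v =>
    IsClosed.preimage (WeakBilin.eval_continuous ((topDualPairing ℝ H).flip) _) isClosed_Iic

theorem isCompact_weak_clarkeSubdiff {f : H → ℝ} {L : NNReal} {x : H} {δ : ℝ}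
    (hL : LipschitzOnWith L f (Metric.ball x δ)) (hδ : 0 < δ) :
    IsCompact (asWeak (clarkeSubdiff f x)) := by
  have hball : IsCompact (asWeak (Metric.closedBall (0 : H) (L : ℝ))) := by
    have := isCompact_weak_closedBall (H := H) (L : ℝ)
    rwa [toWeakSpace_image] at this
  refine IsCompact.of_isClosed_subset hball (isClosed_weak_clarkeSubdiff f x) ?_
  intro a ha
  have hnorm : ‖(show H from a)‖ ≤ L := norm_le_of_mem_clarkeSubdiff hL hδ ha
  show (show H from a) ∈ Metric.closedBall (0 : H) (L : ℝ)
  rw [Metric.mem_closedBall, dist_zero_right]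
  exact hnorm

theorem isClosed_convexHull_iUnion_clarkeSubdiff {k : ℕ} (f : Fin k → H → ℝ) (x : H)
    (h : ∀ i, ∃ δ > 0, ∃ L : NNReal, LipschitzOnWith L (f i) (Metric.ball x δ)) :
    IsClosed (convexHull ℝ (⋃ i, clarkeSubdiff (f i) x)) := by
  classical
  set K : Fin k → Set H := fun i => clarkeSubdiff (f i) x with hK
  have hKconv : ∀ i, Convex ℝ (K i) := fun i => convex_clarkeSubdiff (f i) x
  have hKne : ∀ i, (K i).Nonempty := fun i => by
    obtain ⟨δ, hδ, L, hL⟩ := h i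
    exact clarkeSubdiff_nonempty hL hδ
  have hKc : ∀ i, IsCompact (asWeak (K i)) := fun i => by
    obtain ⟨δ, hδ, L, hL⟩ := h i
    exact isCompact_weak_clarkeSubdiff hL hδ
  rw [convexHull_iUnion_eq_image K hKconv hKne]
  set S : Set ((Fin k → ℝ) × (Fin k → WeakSpace ℝ H)) :=
    (stdSimplex ℝ (Fin k)) ×ˢ Set.univ.pi (fun i => asWeak (K i)) with hSdef
  set Φ : (Fin k → ℝ) × (Fin k → WeakSpace ℝ H) → WeakSpace ℝ H :=
    fun q => ∑ i, q.1 i • q.2 i with hΦdef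
  have hS : IsCompact S := (isCompact_stdSimplex _ _).prod (isCompact_univ_pi hKc)
  have hΦ : Continuous Φ := continuous_finset_sum _ fun i _ =>
    ((continuous_apply i).comp continuous_fst).smul ((continuous_apply i).comp continuous_snd)
  have hcomp : IsCompact (Φ '' S) := hS.image hΦ
  have h1 : IsCompact (eW (H := H) '' (Φ '' S)) := hcomp.image continuous_eW
  have h2 : IsClosed (eW (H := H) '' (Φ '' S)) := h1.isClosed
  have h3 : IsClosed (Φ '' S) := by
    have hpre : (Φ '' S) = eW (H := H) ⁻¹' (eW (H := H) '' (Φ '' S)) :=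
      (Set.preimage_image_eq _ injective_eW).symm
    rw [hpre]; exact h2.preimage continuous_eW
  have h4 : IsClosed ((toWeakSpaceCLM ℝ H) ⁻¹' (Φ '' S)) :=
    h3.preimage (toWeakSpaceCLM ℝ H).continuous
  have h5 : (toWeakSpaceCLM ℝ H) ⁻¹' (Φ '' S) = (Φ '' S : Set H) := rfl
  rw [h5] at h4
  exact h4

end weak

end Stmt7Aux

open Stmt7Aux

/-- Demi-closedness of the multiobjective ε-subdifferential: if `x_j → x`, `ε_j ↓ 0`,
`w_j ∈ F_{ε_j}(x_j)` and `w_j ⇀ w`, then `w ∈ F_0(x) = convexHull (⋃ i, ∂f_i(x))`. -/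
theorem stmt7 {H : Type*} [NormedAddCommGroup H] [InnerProductSpace ℝ H] [CompleteSpace H]
    {k : ℕ} (f : Fin k → H → ℝ) (x : H)
    (hlip : ∀ i, LocallyLipschitzNear (f i) x)
    (εs : ℕ → ℝ) (hεpos : ∀ j, 0 < εs j) (hε : Tendsto εs atTop (𝓝 (0 : ℝ)))
    (xs : ℕ → H) (hx : Tendsto xs atTop (𝓝 x))
    (ws : ℕ → H) (w : H)
    (hweak : ∀ v : H, Tendsto (fun j => ⟪ws j, v⟫) atTop (𝓝 ⟪w, v⟫))
    (hmem : ∀ j, ws j ∈ multiSubdiff f (εs j) (xs j)) :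
    w ∈ convexHull ℝ (⋃ i : Fin k, clarkeSubdiff (f i) x) := by
  classical
  rcases Nat.eq_zero_or_pos k with rfl | hk
  · exact absurd (hmem 0) (by simp [multiSubdiff])
  haveI : Nonempty (Fin k) := ⟨⟨0, hk⟩⟩
  obtain ⟨δ, hδ, L, hL⟩ : ∃ δ > 0, ∃ L : NNReal, ∀ i,
      LipschitzOnWith L (f i) (Metric.ball x δ) := by
    choose d hd l hl using hlip
    refine ⟨Finset.univ.inf' Finset.univ_nonempty d, ?_,
      Finset.univ.sup' Finset.univ_nonempty l, fun i => ?_⟩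
    · exact (Finset.lt_inf'_iff _).2 fun i _ => hd i
    · refine (lipschitzOnWith_weaken (hl i) (Finset.le_sup' l (Finset.mem_univ i))).mono ?_
      exact Metric.ball_subset_ball (Finset.inf'_le _ (Finset.mem_univ i))
  have hDclosed : IsClosed (convexHull ℝ (⋃ i : Fin k, clarkeSubdiff (f i) x)) :=
    isClosed_convexHull_iUnion_clarkeSubdiff f x (fun i => ⟨δ, hδ, L, hL i⟩)
  have hDconv : Convex ℝ (convexHull ℝ (⋃ i : Fin k, clarkeSubdiff (f i) x)) :=
    convex_convexHull ℝ _
  have hkey : ∀ v : H, ⟪w, v⟫ ≤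
      Finset.univ.sup' Finset.univ_nonempty (fun i => clarkeDir (f i) x v) := by
    intro v
    by_contra hlt
    push_neg at hlt
    obtain ⟨c, hc1, hc2⟩ := exists_between hlt
    have husc : ∀ i, ∃ r > 0, r < δ ∧ ∀ y ∈ Metric.ball x r, clarkeDir (f i) y v ≤ c :=
      fun i => usc_clarkeDir (hL i) hδ v
        (lt_of_le_of_lt (Finset.le_sup' (fun i => clarkeDir (f i) x v) (Finset.mem_univ i)) hc1)
    choose r hr hrδ hrle using husc
    set r0 := Finset.univ.inf' Finset.univ_nonempty r with hr0def
    have hr0 : 0 < r0 := (Finset.lt_inf'_iff _).2 fun i _ => hr i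
    have hev1 : ∀ᶠ j in atTop, εs j < r0/2 := hε.eventually (gt_mem_nhds (half_pos hr0))
    have hev2 : ∀ᶠ j in atTop, xs j ∈ Metric.ball x (r0/2) :=
      hx.eventually (Metric.ball_mem_nhds _ (by positivity))
    have hevle : ∀ᶠ j in atTop, ⟪ws j, v⟫ ≤ c := by
      filter_upwards [hev1, hev2] with j h1 h2
      have hsub : ∀ i, ∀ y ∈ Metric.closedBall (xs j) (εs j), clarkeDir (f i) y v ≤ c := by
        intro i y hy
        apply hrle i
        rw [Metric.mem_closedBall] at hy
        rw [Metric.mem_ball] at h2 ⊢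
        have h3 := dist_triangle y (xs j) x
        have h4 : r0 ≤ r i := Finset.inf'_le _ (Finset.mem_univ i)
        linarith
      exact multiSubdiff_subset_halfspace f (εs j) (xs j) v c hsub (hmem j)
    have := le_of_tendsto (hweak v) hevle
    linarith
  by_contra hw
  obtain ⟨φ, u, hφ1, hφ2⟩ := geometric_hahn_banach_closed_point hDconv hDclosed hw
  set v : H := (InnerProductSpace.toDual ℝ H).symm φ with hv
  have hφeq : ∀ z : H, φ z = ⟪z, v⟫ := fun z => by
    have h1 : ⟪v, z⟫ = φ z := by rw [hv]; exact InnerProductSpace.toDual_symm_apply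
    rw [← h1, real_inner_comm]
  obtain ⟨i0, -, hi0⟩ := Finset.exists_mem_eq_sup' (Finset.univ_nonempty (α := Fin k))
    (fun i => clarkeDir (f i) x v)
  obtain ⟨a, haK, hav⟩ := exists_mem_clarkeSubdiff_inner_eq (hL i0) hδ v
  have haD : a ∈ convexHull ℝ (⋃ i : Fin k, clarkeSubdiff (f i) x) :=
    subset_convexHull ℝ _ (Set.mem_iUnion.2 ⟨i0, haK⟩)
  have h1 : φ a < u := hφ1 a haD
  have h2 := hkey v
  rw [hi0] at h2
  rw [hφeq a] at h1
  rw [hφeq w] at hφ2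
  linarith [hav ▸ h2]
end

section
/- Let H be a real Hilbert space and let f_1,…,f_k : H → ℝ each be locally Lipschitz near x ∈ H. If 0 ∈ F_ε(x) for all ε > 0, then x is Pareto critical, i.e., 0 ∈ convexHull(⋃_{i=1}^k ∂f_i(x)). -/
open Filter Topology RealInnerProductSpace

namespace Stmt8Aux

variable {H : Type*} [NormedAddCommGroup H] [InnerProductSpace ℝ H]

noncomputable def qt (f : H → ℝ) (v : H) : H × ℝ → ℝ :=
  fun p => (f (p.1 + p.2 • v) - f p.1) / p.2

noncomputable def FF (x : H) : Filter (H × ℝ) := (𝓝 x) ×ˢ (𝓝[>] (0:ℝ))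

instance (x : H) : (FF x).NeBot := Filter.prod_neBot.2 ⟨inferInstance, inferInstance⟩

lemma clarkeDir_def (f : H → ℝ) (x v : H) :
    clarkeDir f x v = limsup (qt f v) (FF x) := rfl

lemma ev_bound {f : H → ℝ} {L : NNReal} {x0 y : H} {R r : ℝ}
    (hL : LipschitzOnWith L f (Metric.ball x0 R)) (hsub : Metric.ball y r ⊆ Metric.ball x0 R)
    (hr : 0 < r) (v : H) :
    ∀ᶠ p in FF y, |qt f v p| ≤ L * ‖v‖ := by
  have hv1 : (0:ℝ) < ‖v‖ + 1 := by positivity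
  have ht0 : 0 < r / (2 * (‖v‖ + 1)) := by positivity
  have ht0' : r / (2 * (‖v‖ + 1)) * (‖v‖ + 1) = r / 2 := by
    field_simp
  filter_upwards [Filter.prod_mem_prod (Metric.ball_mem_nhds y (half_pos hr))
    (Ioo_mem_nhdsGT_of_mem ⟨le_rfl, ht0⟩)] with p hp
  obtain ⟨hp1, hp2⟩ := hp
  have hp2pos : (0:ℝ) < p.2 := hp2.1
  have hnorm : ‖p.2 • v‖ = p.2 * ‖v‖ := by
    rw [norm_smul, Real.norm_eq_abs, abs_of_pos hp2pos]
  have hsmall : ‖p.2 • v‖ < r / 2 := by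
    rw [hnorm]
    calc p.2 * ‖v‖ ≤ p.2 * (‖v‖ + 1) := by nlinarith
      _ < r / (2 * (‖v‖ + 1)) * (‖v‖ + 1) := by
          exact mul_lt_mul_of_pos_right hp2.2 hv1
      _ = r / 2 := ht0'
  have hy1 : p.1 ∈ Metric.ball x0 R :=
    hsub (Metric.mem_ball.2 (lt_of_lt_of_le (Metric.mem_ball.1 hp1) (half_le_self hr.le)))
  have hy2 : p.1 + p.2 • v ∈ Metric.ball x0 R := by
    apply hsub
    rw [Metric.mem_ball]
    have hd1 : dist (p.1 + p.2 • v) p.1 = ‖p.2 • v‖ := by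
      simp [dist_eq_norm]
    calc dist (p.1 + p.2 • v) y ≤ dist (p.1 + p.2 • v) p.1 + dist p.1 y := dist_triangle _ _ _
      _ < r / 2 + r / 2 := by
          rw [hd1]
          exact add_lt_add hsmall (Metric.mem_ball.1 hp1)
      _ = r := by ring
  have hd : |f (p.1 + p.2 • v) - f p.1| ≤ L * (p.2 * ‖v‖) := by
    have h := hL.dist_le_mul _ hy2 _ hy1
    rwa [Real.dist_eq, dist_eq_norm, add_sub_cancel_left, hnorm] at h
  have habs : |qt f v p| = |f (p.1 + p.2 • v) - f p.1| / p.2 := by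
    rw [qt, abs_div, abs_of_pos hp2pos]
  rw [habs, div_le_iff₀ hp2pos]
  calc |f (p.1 + p.2 • v) - f p.1| ≤ L * (p.2 * ‖v‖) := hd
    _ = L * ‖v‖ * p.2 := by ring

lemma bdd_above_qt {f : H → ℝ} {L : NNReal} {x0 y : H} {R r : ℝ}
    (hL : LipschitzOnWith L f (Metric.ball x0 R)) (hsub : Metric.ball y r ⊆ Metric.ball x0 R)
    (hr : 0 < r) (v : H) :
    IsBoundedUnder (· ≤ ·) (FF y) (qt f v) :=
  isBoundedUnder_of_eventually_le ((ev_bound hL hsub hr v).mono fun _ hp => (abs_le.1 hp).2)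

lemma cobdd_qt {f : H → ℝ} {L : NNReal} {x0 y : H} {R r : ℝ}
    (hL : LipschitzOnWith L f (Metric.ball x0 R)) (hsub : Metric.ball y r ⊆ Metric.ball x0 R)
    (hr : 0 < r) (v : H) :
    IsCoboundedUnder (· ≤ ·) (FF y) (qt f v) :=
  IsBoundedUnder.isCoboundedUnder_le
    (isBoundedUnder_of_eventually_ge ((ev_bound hL hsub hr v).mono fun _ hp =>
      (neg_le_of_abs_le hp)))

lemma clarkeDir_le_norm {f : H → ℝ} {L : NNReal} {x0 y : H} {R r : ℝ}
    (hL : LipschitzOnWith L f (Metric.ball x0 R)) (hsub : Metric.ball y r ⊆ Metric.ball x0 R)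
    (hr : 0 < r) (v : H) :
    clarkeDir f y v ≤ L * ‖v‖ := by
  rw [clarkeDir_def]
  exact limsup_le_of_le (cobdd_qt hL hsub hr v)
    ((ev_bound hL hsub hr v).mono fun _ hp => (abs_le.1 hp).2)

lemma clarkeDir_zero (f : H → ℝ) (x : H) : clarkeDir f x 0 = 0 := by
  rw [clarkeDir_def]
  have : qt f (0:H) = fun _ => (0:ℝ) := by
    funext p; simp [qt]
  rw [this]
  exact limsup_const 0

end Stmt8Aux

namespace Stmt8Aux

variable {H : Type*} [NormedAddCommGroup H] [InnerProductSpace ℝ H]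

lemma clarkeDir_add_le {f : H → ℝ} {L : NNReal} {x : H} {R : ℝ}
    (hL : LipschitzOnWith L f (Metric.ball x R)) (hR : 0 < R) (u v : H) :
    clarkeDir f x (u + v) ≤ clarkeDir f x u + clarkeDir f x v := by
  have hsub : Metric.ball x R ⊆ Metric.ball x R := subset_rfl
  set φ : H × ℝ → H × ℝ := fun p => (p.1 + p.2 • v, p.2) with hφdef
  have hφ : Tendsto φ (FF x) (FF x) := by
    apply Tendsto.prodMk
    · have h1 : Tendsto (fun p : H × ℝ => p.1) (FF x) (𝓝 x) := tendsto_fst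
      have h2 : Tendsto (fun p : H × ℝ => p.2) (FF x) (𝓝 (0:ℝ)) :=
        tendsto_snd.mono_right nhdsWithin_le_nhds
      have := h1.add ((h2.smul_const v))
      simpa using this
    · exact tendsto_snd
  have hev_u := ev_bound hL hsub hR u
  have hev_v := ev_bound hL hsub hR v
  have hkey : qt f (u + v) = (qt f u ∘ φ) + qt f v := by
    funext p
    have harg : p.1 + p.2 • v + p.2 • u = p.1 + p.2 • (u + v) := by
      rw [smul_add]; abel
    simp only [qt, Pi.add_apply, Function.comp_apply, hφdef, harg, ← add_div,
      sub_add_sub_cancel]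
  rw [clarkeDir_def, clarkeDir_def, clarkeDir_def, hkey]
  have h₁ : IsBoundedUnder (· ≥ ·) (FF x) (qt f u ∘ φ) :=
    isBoundedUnder_of_eventually_ge ((hφ.eventually hev_u).mono fun p hp =>
      neg_le_of_abs_le hp)
  have h₂ : IsBoundedUnder (· ≤ ·) (FF x) (qt f u ∘ φ) :=
    isBoundedUnder_of_eventually_le ((hφ.eventually hev_u).mono fun p hp => (abs_le.1 hp).2)
  have h₃ : IsCoboundedUnder (· ≤ ·) (FF x) (qt f v) := cobdd_qt hL hsub hR v
  have h₄ : IsBoundedUnder (· ≤ ·) (FF x) (qt f v) := bdd_above_qt hL hsub hR v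
  refine (limsup_add_le h₁ h₂ h₃ h₄).trans (add_le_add_left ?_ _)
  have hcomp : limsup (qt f u ∘ φ) (FF x) = limsup (qt f u) (Filter.map φ (FF x)) :=
    limsup_comp _ _ _
  rw [hcomp]
  haveI : (Filter.map φ (FF x)).NeBot := Filter.NeBot.map inferInstance φ
  have hb : IsBoundedUnder (· ≥ ·) (Filter.map φ (FF x)) (qt f u) := by
    rw [IsBoundedUnder, Filter.map_map]; exact h₁
  exact limsup_le_limsup_of_le hφ hb.isCoboundedUnder_le (bdd_above_qt hL hsub hR u)

lemma clarkeDir_smul {f : H → ℝ} {L : NNReal} {x : H} {R : ℝ}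
    (hL : LipschitzOnWith L f (Metric.ball x R)) (hR : 0 < R) {c : ℝ} (hc : 0 < c) (v : H) :
    clarkeDir f x (c • v) = c * clarkeDir f x v := by
  have hsub : Metric.ball x R ⊆ Metric.ball x R := subset_rfl
  set ψ : H × ℝ → H × ℝ := fun p => (p.1, c * p.2) with hψdef
  set ψi : H × ℝ → H × ℝ := fun p => (p.1, c⁻¹ * p.2) with hψidef
  have hmul : ∀ (a : ℝ), 0 < a → Tendsto (fun t : ℝ => a * t) (𝓝[>] (0:ℝ)) (𝓝[>] (0:ℝ)) := by
    intro a ha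
    apply tendsto_nhdsWithin_of_tendsto_nhds_of_eventually_within
    · have : Tendsto (fun t : ℝ => a * t) (𝓝 (0:ℝ)) (𝓝 (a * 0)) :=
        (continuous_const.mul continuous_id).tendsto 0
      simpa using this.mono_left nhdsWithin_le_nhds
    · filter_upwards [self_mem_nhdsWithin] with t ht
      exact mul_pos ha ht
  have hψ : Tendsto ψ (FF x) (FF x) :=
    Tendsto.prodMk tendsto_fst ((hmul c hc).comp tendsto_snd)
  have hψi : Tendsto ψi (FF x) (FF x) :=
    Tendsto.prodMk tendsto_fst ((hmul c⁻¹ (inv_pos.2 hc)).comp tendsto_snd)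
  have hmap : Filter.map ψ (FF x) = FF x := by
    refine le_antisymm hψ ?_
    have hcomp : ψ ∘ ψi = id := by
      funext p
      simp [hψdef, hψidef, mul_inv_cancel_left₀ hc.ne']
    calc FF x = Filter.map (ψ ∘ ψi) (FF x) := by rw [hcomp, Filter.map_id]
      _ = Filter.map ψ (Filter.map ψi (FF x)) := by rw [Filter.map_map]
      _ ≤ Filter.map ψ (FF x) := Filter.map_mono hψi
  have hkey : qt f (c • v) = (fun r : ℝ => c * r) ∘ (qt f v ∘ ψ) := by
    funext p
    have harg : p.1 + (c * p.2) • v = p.1 + p.2 • (c • v) := by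
      rw [smul_smul, mul_comm]
    simp only [qt, Function.comp_apply, hψdef, harg]
    rw [mul_div_assoc']
    exact (mul_div_mul_left _ _ hc.ne').symm
  rw [clarkeDir_def, clarkeDir_def, hkey]
  have hbdd : IsBoundedUnder (· ≤ ·) (FF x) (qt f v ∘ ψ) := by
    rw [IsBoundedUnder, ← Filter.map_map, hmap]
    exact bdd_above_qt hL hsub hR v
  have hcob : IsCoboundedUnder (· ≤ ·) (FF x) (qt f v ∘ ψ) := by
    rw [IsCoboundedUnder, ← Filter.map_map, hmap]
    exact cobdd_qt hL hsub hR v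
  have hmono : Monotone (fun r : ℝ => c * r) := fun a b hab => mul_le_mul_of_nonneg_left hab hc.le
  have hcont : ContinuousAt (fun r : ℝ => c * r) (limsup (qt f v ∘ ψ) (FF x)) :=
    (continuous_const.mul continuous_id).continuousAt
  rw [← hmono.map_limsup_of_continuousAt (qt f v ∘ ψ) hcont hbdd hcob]
  congr 1
  rw [limsup_comp, hmap]

end Stmt8Aux

namespace Stmt8Aux

variable {H : Type*} [NormedAddCommGroup H] [InnerProductSpace ℝ H]

variable [CompleteSpace H] in
lemma exists_clarke_support_ne {f : H → ℝ} {L : NNReal} {x : H} {R : ℝ}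
    (hL : LipschitzOnWith L f (Metric.ball x R)) (hR : 0 < R) {v : H} (hv : v ≠ 0) :
    ∃ w ∈ clarkeSubdiff f x, ⟪w, v⟫ = clarkeDir f x v := by
  have hsub : Metric.ball x R ⊆ Metric.ball x R := subset_rfl
  set N : H → ℝ := fun z => clarkeDir f x z with hN
  have hNle : ∀ z, N z ≤ L * ‖z‖ := fun z => clarkeDir_le_norm hL hsub hR z
  have hNhom : ∀ c : ℝ, 0 < c → ∀ z, N (c • z) = c * N z := fun c hc z =>
    clarkeDir_smul hL hR hc z
  have hNadd : ∀ z w : H, N (z + w) ≤ N z + N w := fun z w =>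
    clarkeDir_add_le hL hR z w
  have hN0 : N 0 = 0 := clarkeDir_zero f x
  have hNneg : ∀ z, -N (-z) ≤ N z := by
    intro z
    have h := hNadd z (-z)
    rw [add_neg_cancel, hN0] at h
    linarith
  set p : H →ₗ.[ℝ] ℝ := LinearPMap.mkSpanSingleton v (N v) hv
  have hdom : ∀ z : p.domain, p z ≤ N z := by
    rintro ⟨z, hz⟩
    obtain ⟨c, rfl⟩ := Submodule.mem_span_singleton.1 hz
    have happ : p ⟨c • v, hz⟩ = c * N v :=
      (LinearPMap.mkSpanSingleton'_apply _ _ _ c _).trans (smul_eq_mul ..)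
    rw [happ]
    rcases lt_trichotomy c 0 with hc | hc | hc
    · have h1 : N (c • v) = (-c) * N (-v) := by
        have : c • v = (-c) • (-v) := by rw [neg_smul, smul_neg, neg_neg]
        rw [this, hNhom (-c) (by linarith) (-v)]
      have h2 := hNneg v
      rw [h1]
      nlinarith
    · subst hc
      simp only [zero_smul, zero_mul]
      rw [hN0]
    · rw [hNhom c hc]
  obtain ⟨g, hg1, hg2⟩ := exists_extension_of_le_sublinear p N hNhom hNadd hdom
  have hgv : g v = N v := by
    have hmem : v ∈ p.domain := Submodule.mem_span_singleton_self v
    exact (hg1 ⟨v, hmem⟩).trans (LinearPMap.mkSpanSingleton_apply ℝ ℝ hv (N v))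
  have hgbound : ∀ z, ‖g z‖ ≤ (L : ℝ) * ‖z‖ := by
    intro z
    rw [Real.norm_eq_abs, abs_le]
    constructor
    · have h1 := hg2 (-z)
      have h2 := hNle (-z)
      rw [map_neg, norm_neg] at *
      linarith [hNle (-z), hg2 (-z)]
    · exact (hg2 z).trans (hNle z)
  set G : H →L[ℝ] ℝ := LinearMap.mkContinuous g L hgbound with hG
  set w : H := (InnerProductSpace.toDual ℝ H).symm G with hw
  have hwz : ∀ z, ⟪w, z⟫ = g z := by
    intro z
    rw [hw, InnerProductSpace.toDual_symm_apply]
    rfl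
  refine ⟨w, fun z => ?_, ?_⟩
  · rw [hwz z]; exact hg2 z
  · rw [hwz v, hgv]

variable [CompleteSpace H] in
lemma exists_clarke_support {f : H → ℝ} {L : NNReal} {x : H} {R : ℝ}
    (hL : LipschitzOnWith L f (Metric.ball x R)) (hR : 0 < R) (v : H) :
    ∃ w ∈ clarkeSubdiff f x, ⟪w, v⟫ = clarkeDir f x v := by
  by_cases hv : v = 0
  · subst hv
    by_cases htriv : ∃ v' : H, v' ≠ 0
    · obtain ⟨v', hv'⟩ := htriv
      obtain ⟨w, hw, -⟩ := exists_clarke_support_ne hL hR hv'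
      exact ⟨w, hw, by rw [inner_zero_right, clarkeDir_zero]⟩
    · push_neg at htriv
      refine ⟨0, fun z => ?_, by rw [inner_zero_right, clarkeDir_zero]⟩
      rw [htriv z, inner_zero_right, clarkeDir_zero]
  · exact exists_clarke_support_ne hL hR hv

/-- Upper semicontinuity of the Clarke directional derivative. -/
lemma clarkeDir_usc {f : H → ℝ} {L : NNReal} {x : H} {R : ℝ}
    (hL : LipschitzOnWith L f (Metric.ball x R)) (hR : 0 < R) (v : H) {c : ℝ}
    (hc : clarkeDir f x v < c) :
    ∃ η > 0, ∀ y ∈ Metric.closedBall x η, clarkeDir f y v ≤ c := by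
  have hsub : Metric.ball x R ⊆ Metric.ball x R := subset_rfl
  rw [clarkeDir_def] at hc
  have hev : ∀ᶠ p in FF x, qt f v p < c :=
    eventually_lt_of_limsup_lt hc (bdd_above_qt hL hsub hR v)
  rw [FF, Filter.eventually_prod_iff] at hev
  obtain ⟨pa, hpa, pb, hpb, hpq⟩ := hev
  obtain ⟨δ, hδ, hδball⟩ := Metric.eventually_nhds_iff_ball.1 hpa
  set η : ℝ := min (δ / 2) (R / 2) with hη
  have hηpos : 0 < η := lt_min (half_pos hδ) (half_pos hR)
  refine ⟨η, hηpos, fun y hy => ?_⟩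
  have hyx : dist y x ≤ η := Metric.mem_closedBall.1 hy
  have hball : Metric.ball y (R / 2) ⊆ Metric.ball x R := by
    intro z hz
    rw [Metric.mem_ball] at hz ⊢
    calc dist z x ≤ dist z y + dist y x := dist_triangle _ _ _
      _ < R / 2 + R / 2 := add_lt_add_of_lt_of_le hz (hyx.trans (min_le_right _ _))
      _ = R := by ring
  have hevy : ∀ᶠ p in FF y, qt f v p ≤ c := by
    have h1 : ∀ᶠ y' in 𝓝 y, pa y' := by
      filter_upwards [Metric.ball_mem_nhds y (half_pos hδ)] with y' hy'
      apply hδball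
      rw [Metric.mem_ball] at hy' ⊢
      calc dist y' x ≤ dist y' y + dist y x := dist_triangle _ _ _
        _ < δ / 2 + δ / 2 := add_lt_add_of_lt_of_le hy' (hyx.trans (min_le_left _ _))
        _ = δ := by ring
    filter_upwards [h1.prod_mk hpb] with p hp
    exact (hpq hp.1 hp.2).le
  rw [clarkeDir_def]
  exact limsup_le_of_le (cobdd_qt hL hball (half_pos hR) v) hevy

/-- Norm bound for elements of the Clarke subdifferential. -/
lemma clarkeSubdiff_norm_le {f : H → ℝ} {L : NNReal} {x0 y : H} {R r : ℝ}
    (hL : LipschitzOnWith L f (Metric.ball x0 R)) (hsub : Metric.ball y r ⊆ Metric.ball x0 R)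
    (hr : 0 < r) {w : H} (hw : w ∈ clarkeSubdiff f y) : ‖w‖ ≤ L := by
  have h1 : ⟪w, w⟫ ≤ (L : ℝ) * ‖w‖ := (hw w).trans (clarkeDir_le_norm hL hsub hr w)
  rw [real_inner_self_eq_norm_mul_norm] at h1
  rcases eq_or_lt_of_le (norm_nonneg w) with h | h
  · rw [← h]; exact L.2
  · exact le_of_mul_le_mul_right (by linarith) h

end Stmt8Aux

set_option maxHeartbeats 1000000 in
/-- If `0 ∈ F_ε(x)` for all `ε > 0`, then `x` is Pareto critical. -/
theorem stmt8 {H : Type*} [NormedAddCommGroup H] [InnerProductSpace ℝ H] [CompleteSpace H]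
    {k : ℕ} (f : Fin k → H → ℝ) (x : H)
    (hlip : ∀ i, LocallyLipschitzNear (f i) x)
    (h : ∀ ε : ℝ, 0 < ε → (0 : H) ∈ multiSubdiff f ε x) :
    (0 : H) ∈ convexHull ℝ (⋃ i : Fin k, clarkeSubdiff (f i) x) := by
  classical
  choose R hRpos L hLip using hlip
  rcases Nat.eq_zero_or_pos k with hk0 | hkpos
  · exfalso
    have h1 := h 1 one_pos
    rw [multiSubdiff] at h1
    have hempty : (⋃ i : Fin k, goldsteinSubdiff (f i) 1 x) = ∅ := by
      subst hk0; simp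
    rw [hempty] at h1
    simpa using h1
  haveI : Nonempty (Fin k) := Fin.pos_iff_nonempty.1 hkpos
  haveI : Inhabited (Fin k) := ⟨⟨0, hkpos⟩⟩
  set D : Fin k → Set H := fun i => clarkeSubdiff (f i) x with hD
  set C : Set H := convexHull ℝ (⋃ i, D i) with hC
  -- Step 1 : 0 ∈ closure C
  have hclos : (0:H) ∈ closure C := by
    by_contra h0
    obtain ⟨G, u, hGu, hG⟩ :=
      geometric_hahn_banach_point_closed ((convex_convexHull ℝ _).closure) isClosed_closure h0
    rw [map_zero] at hGu
    set g : H := (InnerProductSpace.toDual ℝ H).symm G with hg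
    set v : H := -g with hv
    have hNi : ∀ i, clarkeDir (f i) x v < -u := by
      intro i
      obtain ⟨w, hwD, hwv⟩ := Stmt8Aux.exists_clarke_support (hLip i) (hRpos i) v
      have hwC : w ∈ closure C :=
        subset_closure (subset_convexHull ℝ _ (Set.mem_iUnion.2 ⟨i, hwD⟩))
      have hGw : u < G w := hG w hwC
      have hinner : ⟪w, v⟫ = -(G w) := by
        rw [hv, inner_neg_right, hg]
        congr 1
        rw [real_inner_comm, InnerProductSpace.toDual_symm_apply]
      rw [← hwv, hinner]
      linarith
    have husc : ∀ i, ∃ η > 0, ∀ y ∈ Metric.closedBall x η, clarkeDir (f i) y v ≤ -u :=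
      fun i => Stmt8Aux.clarkeDir_usc (hLip i) (hRpos i) v (hNi i)
    choose η hηpos hη using husc
    set η0 : ℝ := Finset.univ.inf' Finset.univ_nonempty η with hη0
    have hη0pos : 0 < η0 := (Finset.lt_inf'_iff _).2 fun i _ => hηpos i
    have h0mem := h η0 hη0pos
    set S : Set H := {z : H | ⟪v, z⟫ ≤ -u} with hS
    have hSclosed : IsClosed S :=
      isClosed_le (Continuous.inner continuous_const continuous_id) continuous_const
    have hSconvex : Convex ℝ S := by
      refine convex_halfSpace_le ⟨fun a b => inner_add_right v a b, fun c a => ?_⟩ (-u)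
      rw [real_inner_smul_right, smul_eq_mul]
    have hsub : multiSubdiff f η0 x ⊆ S := by
      rw [multiSubdiff]
      refine closure_minimal (convexHull_min ?_ hSconvex) hSclosed
      refine Set.iUnion_subset fun i => ?_
      rw [goldsteinSubdiff]
      refine closure_minimal (convexHull_min ?_ hSconvex) hSclosed
      refine Set.iUnion₂_subset fun y hy => ?_
      intro w hw
      have h1 : ⟪w, v⟫ ≤ clarkeDir (f i) y v := hw v
      have h2 : clarkeDir (f i) y v ≤ -u := by
        refine hη i y (Metric.closedBall_subset_closedBall ?_ hy)
        exact Finset.inf'_le η (Finset.mem_univ i)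
      rw [hS, Set.mem_setOf_eq, real_inner_comm]
      linarith
    have hfin := hsub h0mem
    rw [hS, Set.mem_setOf_eq, inner_zero_right] at hfin
    linarith
  -- Step 2 : closedness via weak-* compactness
  set j : H → WeakDual ℝ H := fun w => (InnerProductSpace.toDual ℝ H w : H →L[ℝ] ℝ) with hj
  have j_apply : ∀ w z : H, j w z = ⟪w, z⟫ := fun w z => InnerProductSpace.toDual_apply_apply
  have j_add : ∀ a b : H, j (a + b) = j a + j b := by
    intro a b
    refine DFunLike.ext _ _ fun z => ?_
    show ⟪a + b, z⟫ = ⟪a, z⟫ + ⟪b, z⟫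
    exact inner_add_left a b z
  have j_smul : ∀ (c : ℝ) (a : H), j (c • a) = c • j a := by
    intro c a
    refine DFunLike.ext _ _ fun z => ?_
    show ⟪c • a, z⟫ = c * ⟪a, z⟫
    exact real_inner_smul_left a z c
  have j_inj : Function.Injective j := fun a b hab =>
    (InnerProductSpace.toDual ℝ H).injective hab
  have j_cont : Continuous j :=
    WeakDual.continuous_of_continuous_eval fun z =>
      (Continuous.inner continuous_id continuous_const : Continuous fun w : H => ⟪w, z⟫)
  set jA : H →+ WeakDual ℝ H := AddMonoidHom.mk' j j_add with hjA
  set Dd : Fin k → Set (WeakDual ℝ H) :=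
    fun i => {φ | ∀ z, φ z ≤ clarkeDir (f i) x z} with hDd
  have hDd_img : ∀ i, Dd i = j '' D i := by
    intro i
    ext φ
    constructor
    · intro hφ
      set w : H := (InnerProductSpace.toDual ℝ H).symm (WeakDual.toStrongDual φ) with hw
      refine ⟨w, fun z => ?_, ?_⟩
      · rw [hw, InnerProductSpace.toDual_symm_apply]
        exact hφ z
      · show (InnerProductSpace.toDual ℝ H) w = φ
        rw [hw]
        exact (InnerProductSpace.toDual ℝ H).apply_symm_apply _
    · rintro ⟨w, hwD, rfl⟩
      intro z
      rw [j_apply]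
      exact hwD z
  have hDd_ne : ∀ i, (Dd i).Nonempty := by
    intro i
    obtain ⟨w, hw, -⟩ := Stmt8Aux.exists_clarke_support (hLip i) (hRpos i) 0
    exact ⟨j w, fun z => by rw [j_apply]; exact hw z⟩
  have hDd_convex : ∀ i, Convex ℝ (Dd i) := by
    intro i φ hφ ψ hψ a b ha hb hab
    intro z
    have happ : (a • φ + b • ψ) z = a * φ z + b * ψ z := rfl
    rw [happ]
    calc a * φ z + b * ψ z
        ≤ a * clarkeDir (f i) x z + b * clarkeDir (f i) x z :=
          add_le_add (mul_le_mul_of_nonneg_left (hφ z) ha)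
            (mul_le_mul_of_nonneg_left (hψ z) hb)
      _ = clarkeDir (f i) x z := by rw [← add_mul, hab, one_mul]
  have hDd_closed : ∀ i, IsClosed (Dd i) := by
    intro i
    have heq : Dd i = ⋂ z : H, {φ : WeakDual ℝ H | φ z ≤ clarkeDir (f i) x z} := by
      ext φ
      simp only [hDd, Set.mem_setOf_eq, Set.mem_iInter]
    rw [heq]
    exact isClosed_iInter fun z => isClosed_le (WeakDual.eval_continuous z) continuous_const
  have hDd_compact : ∀ i, IsCompact (Dd i) := by
    intro i
    have hsubball : Dd i ⊆ WeakDual.toStrongDual ⁻¹' Metric.closedBall 0 (L i) := by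
      intro φ hφ
      rw [Set.mem_preimage, Metric.mem_closedBall, dist_zero_right]
      refine ContinuousLinearMap.opNorm_le_bound _ (L i).2 fun z => ?_
      rw [Real.norm_eq_abs, abs_le]
      constructor
      · have h1 : φ (-z) ≤ clarkeDir (f i) x (-z) := hφ (-z)
        have h2 : clarkeDir (f i) x (-z) ≤ L i * ‖(-z : H)‖ :=
          Stmt8Aux.clarkeDir_le_norm (hLip i) subset_rfl (hRpos i) (-z)
        rw [norm_neg] at h2
        have h3 : φ (-z) = -(φ z) := map_neg φ z
        rw [h3] at h1
        have : (WeakDual.toStrongDual φ) z = φ z := rfl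
        rw [this]
        linarith
      · have : (WeakDual.toStrongDual φ) z = φ z := rfl
        rw [this]
        exact (hφ z).trans (Stmt8Aux.clarkeDir_le_norm (hLip i) subset_rfl (hRpos i) z)
    exact (WeakDual.isCompact_closedBall (𝕜 := ℝ) (E := H) 0 (L i)).of_isClosed_subset
      (hDd_closed i) hsubball
  set Φ : (Fin k → ℝ) × (Fin k → WeakDual ℝ H) → WeakDual ℝ H :=
    fun p => ∑ i, p.1 i • p.2 i with hΦ
  have hΦc : Continuous Φ := continuous_finset_sum _ fun i _ =>
    ((continuous_apply i).comp continuous_fst).smul ((continuous_apply i).comp continuous_snd)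
  set T : Set ((Fin k → ℝ) × (Fin k → WeakDual ℝ H)) :=
    (stdSimplex ℝ (Fin k)) ×ˢ Set.univ.pi (fun i => Dd i) with hT
  have hTcomp : IsCompact T := (isCompact_stdSimplex (𝕜 := ℝ) (ι := Fin k)).prod (isCompact_univ_pi hDd_compact)
  have hK'closed : IsClosed (Φ '' T) := (hTcomp.image hΦc).isClosed
  have himg : j '' C ⊆ Φ '' T := by
    rintro _ ⟨w, hwC, rfl⟩
    rw [hC, convexHull_eq] at hwC
    obtain ⟨ι, t, wt, z, hw0, hw1, hz, hcm⟩ := hwC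
    have hzD : ∀ jx ∈ t, ∃ i, z jx ∈ D i := fun jx hjx => Set.mem_iUnion.1 (hz jx hjx)
    set c : ι → Fin k := fun jx => if hjx : ∃ i, z jx ∈ D i then hjx.choose else default with hc
    have hcz : ∀ jx ∈ t, z jx ∈ D (c jx) := by
      intro jx hjx
      have hex := hzD jx hjx
      rw [hc]
      simp only [dif_pos hex]
      exact hex.choose_spec
    set lam : Fin k → ℝ := fun i => ∑ jx ∈ t.filter (fun jx => c jx = i), wt jx with hlam
    have hlam0 : ∀ i, 0 ≤ lam i := fun i =>
      Finset.sum_nonneg fun jx hjx => hw0 jx (Finset.mem_filter.1 hjx).1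
    have hlam1 : ∑ i, lam i = 1 := by
      rw [hlam]
      rw [Finset.sum_fiberwise_of_maps_to (fun jx _ => Finset.mem_univ (c jx)) wt]
      exact hw1
    set uu : Fin k → WeakDual ℝ H := fun i =>
      if 0 < lam i then (t.filter (fun jx => c jx = i)).centerMass wt (fun jx => j (z jx))
      else (hDd_ne i).choose with huu
    have huuD : ∀ i, uu i ∈ Dd i := by
      intro i
      simp only [huu]
      split_ifs with hpos
      · refine (hDd_convex i).centerMass_mem
          (fun jx hjx => hw0 jx (Finset.mem_filter.1 hjx).1) hpos (fun jx hjx => ?_)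
        obtain ⟨hjt, hje⟩ := Finset.mem_filter.1 hjx
        rw [hDd_img i]
        exact ⟨z jx, hje ▸ hcz jx hjt, rfl⟩
      · exact (hDd_ne i).choose_spec
    have hterm : ∀ i, lam i • uu i
        = ∑ jx ∈ t.filter (fun jx => c jx = i), wt jx • j (z jx) := by
      intro i
      simp only [huu]
      split_ifs with hpos
      · rw [Finset.centerMass, smul_smul, mul_inv_cancel₀ (ne_of_gt hpos), one_smul]
      · have hzero : lam i = 0 := le_antisymm (not_lt.1 hpos) (hlam0 i)
        have hall : ∀ jx ∈ t.filter (fun jx => c jx = i), wt jx = 0 :=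
          (Finset.sum_eq_zero_iff_of_nonneg
            (fun jx hjx => hw0 jx (Finset.mem_filter.1 hjx).1)).1 hzero
        rw [hzero, zero_smul]
        exact (Finset.sum_eq_zero fun jx hjx => by rw [hall jx hjx, zero_smul]).symm
    refine ⟨(lam, uu), ⟨⟨hlam0, hlam1⟩, Set.mem_univ_pi.2 huuD⟩, ?_⟩
    show ∑ i, lam i • uu i = j w
    calc ∑ i, lam i • uu i
        = ∑ i, ∑ jx ∈ t.filter (fun jx => c jx = i), wt jx • j (z jx) := by
          exact Finset.sum_congr rfl fun i _ => hterm i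
      _ = ∑ jx ∈ t, wt jx • j (z jx) :=
          Finset.sum_fiberwise_of_maps_to (fun jx _ => Finset.mem_univ (c jx)) _
      _ = ∑ jx ∈ t, j (wt jx • z jx) := by
          exact Finset.sum_congr rfl fun jx _ => (j_smul _ _).symm
      _ = jA (∑ jx ∈ t, wt jx • z jx) := (map_sum jA _ _).symm
      _ = j w := by
          have hcm' : ∑ jx ∈ t, wt jx • z jx = w := by
            rw [← Finset.centerMass_eq_of_sum_1 t z hw1]; exact hcm
          rw [hcm']
          rfl
  have h0K' : (0 : WeakDual ℝ H) ∈ Φ '' T := by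
    have hj0 : j 0 = 0 := map_zero jA
    have hmem : j 0 ∈ closure (Φ '' T) :=
      closure_mono himg (image_closure_subset_closure_image j_cont ⟨0, hclos, rfl⟩)
    rw [hj0] at hmem
    rwa [hK'closed.closure_eq] at hmem
  obtain ⟨⟨lam, uu⟩, ⟨hlamS, huupi⟩, hsum0⟩ := h0K'
  have huuD : ∀ i, uu i ∈ Dd i := fun i => huupi i (Set.mem_univ i)
  have hww : ∀ i, ∃ w ∈ D i, j w = uu i := by
    intro i
    have := huuD i
    rw [hDd_img i] at this
    obtain ⟨w, hw1, hw2⟩ := this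
    exact ⟨w, hw1, hw2⟩
  choose ww hwwD hwwj using hww
  have hzero : ∑ i, lam i • ww i = 0 := by
    apply j_inj
    have : jA (∑ i, lam i • ww i) = ∑ i, lam i • uu i := by
      rw [map_sum]
      exact Finset.sum_congr rfl fun i _ => by
        show j (lam i • ww i) = lam i • uu i
        rw [j_smul, hwwj]
    show j (∑ i, lam i • ww i) = j 0
    calc j (∑ i, lam i • ww i) = ∑ i, lam i • uu i := this
      _ = Φ (lam, uu) := rfl
      _ = 0 := hsum0
      _ = j 0 := (map_zero jA).symm
  obtain ⟨hlnn, hls⟩ := hlamS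
  have hfinal := Finset.univ.centerMass_mem_convexHull (w := lam) (fun i _ => hlnn i)
    (by rw [hls]; exact one_pos) (fun i _ => (Set.mem_iUnion.2 ⟨i, hwwD i⟩ : ww i ∈ ⋃ i, D i))
  rw [Finset.centerMass_eq_of_sum_1 _ _ hls, hzero] at hfinal
  exact hfinal
end
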